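/- arXiv:2004.12423 — 8 statements merged into one kernel-verified Lean document; each statement's English description precedes it below -/
import Mathlib

section
/- Let (X,F) be a symmetric n-ary band. Then for every x ∈ X the map ℓ_x is an endomorphism of (X,F), i.e., ℓ_x(F(x₁,…,xₙ)) = F(ℓ_x(x₁),…,ℓ_x(xₙ)) for all x₁,…,xₙ ∈ X. -/
namespace NaryBand

variable {X : Type*}

/-- Replace the window of length `n` starting at position `i` (0-based) of the
`(2*n-1)`-tuple `x` by the value of `F` on that window. -/
def contract {n : ℕ} (F : (Fin n → X) → X) (i : ℕ) (hn : 2 ≤ n) (hi : i ≤ n - 1)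
    (x : Fin (2 * n - 1) → X) : Fin n → X :=
  fun j =>
    if _h1 : (j : ℕ) < i then x ⟨(j : ℕ), by have := j.isLt; omega⟩
    else if _h2 : (j : ℕ) = i then
      F (fun k => x ⟨i + (k : ℕ), by have := k.isLt; omega⟩)
    else x ⟨(j : ℕ) + n - 1, by have := j.isLt; omega⟩

/-- `F` is an associative `n`-ary operation. -/
def NAssoc {n : ℕ} (hn : 2 ≤ n) (F : (Fin n → X) → X) : Prop :=
  ∀ (i : ℕ) (hi : i + 1 ≤ n - 1) (x : Fin (2 * n - 1) → X),
    F (contract F i hn (by omega) x) = F (contract F (i + 1) hn (by omega) x)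

/-- `F` is a symmetric `n`-ary operation. -/
def NSym {n : ℕ} (F : (Fin n → X) → X) : Prop :=
  ∀ (σ : Equiv.Perm (Fin n)) (x : Fin n → X), F (x ∘ σ) = F x

/-- `F` is an idempotent `n`-ary operation. -/
def NIdem {n : ℕ} (F : (Fin n → X) → X) : Prop :=
  ∀ x : X, F (fun _ => x) = x

/-- The associated binary operation `B(x,y) = F(x,…,x,y)` (with `n-1` copies of `x`). -/
def assocB {n : ℕ} (F : (Fin n → X) → X) (x y : X) : X :=
  F (fun j => if (j : ℕ) < n - 1 then x else y)

/-- The map `ℓ_x : y ↦ B(x,y)`. -/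
def ell {n : ℕ} (F : (Fin n → X) → X) (x : X) : X → X :=
  fun y => assocB F x y

/-- The `n`-ary extension `G^{n-1}(x₁,…,xₙ) = G(x₁, G(x₂, …, G(x_{n-1}, xₙ)…))`
of a binary operation `G`. -/
def nExt {n : ℕ} (hn : 1 ≤ n) (G : X → X → X) (x : Fin n → X) : X :=
  (List.ofFn (fun i : Fin (n - 1) => x ⟨(i : ℕ), by have := i.isLt; omega⟩)).foldr G
    (x ⟨n - 1, by omega⟩)

/-- The relation `σ`: `x σ y` iff `B(x,y) = y` and `B(y,x) = x`. -/
def sigmaRel {n : ℕ} (F : (Fin n → X) → X) (x y : X) : Prop :=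
  assocB F x y = y ∧ assocB F y x = x

/-- `(A, mul)` is an abelian group with identity `e` and inversion `inv`. -/
def IsAbelianGroup {A : Type*} (mul : A → A → A) (e : A) (inv : A → A) : Prop :=
  (∀ a b c, mul (mul a b) c = mul a (mul b c)) ∧
  (∀ a b, mul a b = mul b a) ∧
  (∀ a, mul e a = a) ∧
  (∀ a, mul (inv a) a = e)

/-- `k`-fold product `a * ⋯ * a` with respect to `mul` (with `powMul mul e 0 a = e`). -/
def powMul {A : Type*} (mul : A → A → A) (e : A) : ℕ → A → A
  | 0, _ => e
  | k + 1, a => mul a (powMul mul e k a)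

end NaryBand

open NaryBand

namespace NaryBandProof

variable {X : Type*} {n : ℕ}

lemma contract_congr (hn : 2 ≤ n) (F : (Fin n → X) → X) {i j : ℕ} (h : i = j)
    (hi : i ≤ n - 1) (hj : j ≤ n - 1) (w : Fin (2 * n - 1) → X) :
    contract F i hn hi w = contract F j hn hj w := by subst h; rfl

lemma chain (hn : 2 ≤ n) (F : (Fin n → X) → X) (hA : NAssoc hn F)
    (w : Fin (2 * n - 1) → X) :
    F (contract F 0 hn (by omega) w) = F (contract F (n - 1) hn le_rfl w) := by
  have key : ∀ d, d ≤ n - 1 →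
      F (contract F (n - 1 - d) hn (by omega) w) = F (contract F (n - 1) hn le_rfl w) := by
    intro d
    induction d with
    | zero => intro _; rfl
    | succ d ih =>
      intro hd
      have h1 : n - 1 - (d + 1) + 1 = n - 1 - d := by omega
      calc F (contract F (n - 1 - (d + 1)) hn (by omega) w)
          = F (contract F (n - 1 - (d + 1) + 1) hn (by omega) w) := hA _ (by omega) w
        _ = F (contract F (n - 1 - d) hn (by omega) w) :=
            congrArg F (contract_congr hn F h1 _ _ w)
        _ = F (contract F (n - 1) hn le_rfl w) := ih (by omega)
  have h0 : n - 1 - (n - 1) = 0 := by omega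
  calc F (contract F 0 hn (by omega) w)
      = F (contract F (n - 1 - (n - 1)) hn (by omega) w) :=
        congrArg F (contract_congr hn F h0.symm _ _ w)
    _ = F (contract F (n - 1) hn le_rfl w) := key (n - 1) le_rfl

lemma ell_F (hn : 2 ≤ n) (F : (Fin n → X) → X) (hA : NAssoc hn F)
    (x : X) (xs : Fin n → X) :
    ell F x (F xs) =
      F (Function.update xs ⟨0, by omega⟩ (ell F x (xs ⟨0, by omega⟩))) := by
  set w : Fin (2 * n - 1) → X :=
    fun i => if (i : ℕ) < n - 1 then x else xs ⟨(i : ℕ) - (n - 1), by have := i.isLt; omega⟩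
    with hw
  have h1 : contract F (n - 1) hn le_rfl w =
      fun j : Fin n => if (j : ℕ) < n - 1 then x else F xs := by
    funext j
    by_cases hj : (j : ℕ) < n - 1
    · simp [contract, hw, hj]
    · have hj2 : (j : ℕ) = n - 1 := by have := j.isLt; omega
      rw [if_neg hj]
      show (if _h1 : (j : ℕ) < n - 1 then _ else if _h2 : (j : ℕ) = n - 1 then
        F (fun k => w ⟨n - 1 + (k : ℕ), _⟩) else _) = F xs
      rw [dif_neg hj, dif_pos hj2]
      congr 1
      funext k
      show (if (n - 1 + (k : ℕ)) < n - 1 then x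
        else xs ⟨n - 1 + (k : ℕ) - (n - 1), _⟩) = xs k
      rw [if_neg (by omega)]
      congr 1
      exact Fin.ext (by simp)
  have h0 : contract F 0 hn (by omega) w =
      Function.update xs ⟨0, by omega⟩ (ell F x (xs ⟨0, by omega⟩)) := by
    funext j
    by_cases hj : (j : ℕ) = 0
    · have hj' : j = (⟨0, by omega⟩ : Fin n) := Fin.ext hj
      rw [hj']
      rw [Function.update_self]
      show (if _h1 : (0 : ℕ) < 0 then _ else if _h2 : (0 : ℕ) = 0 then
        F (fun k => w ⟨0 + (k : ℕ), _⟩) else _) = ell F x (xs ⟨0, by omega⟩)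
      rw [dif_neg (by omega), dif_pos rfl]
      show F _ = F _
      congr 1
      funext k
      show (if (0 + (k : ℕ)) < n - 1 then x else xs ⟨0 + (k : ℕ) - (n - 1), _⟩)
        = if (k : ℕ) < n - 1 then x else xs ⟨0, by omega⟩
      by_cases hk : (k : ℕ) < n - 1
      · rw [if_pos (by omega), if_pos hk]
      · rw [if_neg (by omega), if_neg hk]
        congr 1
        exact Fin.ext (by have := k.isLt; simp; omega)
    · have hj' : j ≠ (⟨0, by omega⟩ : Fin n) := fun h => hj (congrArg Fin.val h)
      rw [Function.update_of_ne hj']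
      show (if _h1 : (j : ℕ) < 0 then _ else if _h2 : (j : ℕ) = 0 then _
        else w ⟨(j : ℕ) + n - 1, _⟩) = xs j
      rw [dif_neg (by omega), dif_neg hj]
      show (if ((j : ℕ) + n - 1) < n - 1 then x
        else xs ⟨(j : ℕ) + n - 1 - (n - 1), _⟩) = xs j
      rw [if_neg (by omega)]
      congr 1
      exact Fin.ext (by simp; omega)
  have h := chain hn F hA w
  rw [h1, h0] at h
  exact h.symm

lemma ell_F_perm (hn : 2 ≤ n) (F : (Fin n → X) → X) (hA : NAssoc hn F) (hS : NSym F)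
    (x : X) (xs : Fin n → X) (k : Fin n) :
    ell F x (F xs) = F (Function.update xs k (ell F x (xs k))) := by
  set z : Fin n := ⟨0, by omega⟩ with hz
  set s := Equiv.swap z k with hs
  have h1 : F (xs ∘ s) = F xs := hS s xs
  have h2 := ell_F hn F hA x (xs ∘ s)
  have h3 : (xs ∘ s) ⟨0, by omega⟩ = xs k := by
    show xs (s z) = xs k
    simp [hs]
  rw [h1, h3] at h2
  rw [h2]
  have h4 : Function.update (xs ∘ s) ⟨0, by omega⟩ (ell F x (xs k)) =
      (Function.update xs k (ell F x (xs k))) ∘ s := by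
    funext i
    by_cases hi : i = z
    · subst hi
      show Function.update (xs ∘ s) z _ z = Function.update xs k _ (s z)
      rw [Function.update_self, hs, Equiv.swap_apply_left, Function.update_self]
    · have hsk : s i ≠ k := by
        intro h
        apply hi
        have := congrArg s h
        rw [Equiv.apply_eq_iff_eq_symm_apply] at h
        simp [hs] at h
        exact h
      show Function.update (xs ∘ s) z _ i = Function.update xs k _ (s i)
      rw [Function.update_of_ne hi, Function.update_of_ne hsk]
      rfl
  rw [h4, hS s]

lemma ell_self (F : (Fin n → X) → X) (hI : NIdem F) (x : X) :
    ell F x x = x := by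
  simp only [ell, assocB, ite_self]
  exact hI x

lemma ell_ell (hn : 2 ≤ n) (F : (Fin n → X) → X) (hA : NAssoc hn F) (hI : NIdem F)
    (x y : X) : ell F x (ell F x y) = ell F x y := by
  set ws : Fin n → X := fun j => if (j : ℕ) < n - 1 then x else y with hws
  have hxy : ell F x y = F ws := rfl
  rw [hxy, ell_F hn F hA x ws]
  have h0 : ws ⟨0, by omega⟩ = x := by
    show (if (0 : ℕ) < n - 1 then x else y) = x
    rw [if_pos (by omega)]
  rw [h0, ell_self F hI x]
  congr 1
  funext i
  by_cases hi : i = (⟨0, by omega⟩ : Fin n)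
  · rw [hi, Function.update_self, ← h0]
  · rw [Function.update_of_ne hi]

end NaryBandProof


/-- In a symmetric `n`-ary band, every `ℓ_x` is an endomorphism of `(X,F)`. -/
theorem stmt_1 {X : Type*} {n : ℕ} (hn : 2 ≤ n) (F : (Fin n → X) → X)
    (hA : NAssoc hn F) (hS : NSym F) (hI : NIdem F) :
    ∀ (x : X) (xs : Fin n → X),
      ell F x (F xs) = F (fun i => ell F x (xs i)) := by
  intro x xs
  have key : ∀ k, 1 ≤ k → k ≤ n →
      ell F x (F xs) = F (fun i : Fin n => if (i : ℕ) < k then ell F x (xs i) else xs i) := by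
    intro k h1 h2
    induction k with
    | zero => omega
    | succ k ih =>
      by_cases hk0 : k = 0
      · subst hk0
        have h := NaryBandProof.ell_F_perm hn F hA hS x xs ⟨0, by omega⟩
        rw [h]
        congr 1
        funext i
        by_cases hi : i = (⟨0, by omega⟩ : Fin n)
        · rw [hi, Function.update_self, if_pos (by norm_num)]
        · have hi' : ¬ ((i : ℕ) < 1) := by
            intro hlt
            have hv : (i : ℕ) = 0 := by omega
            exact hi (Fin.ext (by simp [hv]))
          rw [Function.update_of_ne hi, if_neg hi']
      · have hk1 : 1 ≤ k := by omega
        have hkn : k < n := by omega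
        have IH := ih hk1 (by omega)
        have step := NaryBandProof.ell_F_perm hn F hA hS x
          (fun i : Fin n => if (i : ℕ) < k then ell F x (xs i) else xs i) ⟨k, hkn⟩
        calc ell F x (F xs)
            = ell F x (ell F x (F xs)) :=
              (NaryBandProof.ell_ell hn F hA hI x (F xs)).symm
          _ = ell F x (F (fun i : Fin n => if (i : ℕ) < k then ell F x (xs i) else xs i)) := by
              rw [← IH]
          _ = _ := step
          _ = F (fun i : Fin n => if (i : ℕ) < k + 1 then ell F x (xs i) else xs i) := by
              congr 1
              funext i
              by_cases hi : i = (⟨k, hkn⟩ : Fin n)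
              · subst hi
                rw [Function.update_self, if_neg (by simp), if_pos (by simp)]
              · have hiv : (i : ℕ) ≠ k := fun h => hi (Fin.ext h)
                rw [Function.update_of_ne hi]
                by_cases hlt : (i : ℕ) < k
                · rw [if_pos hlt, if_pos (by omega)]
                · rw [if_neg hlt, if_neg (by omega)]
  have h := key n (by omega) le_rfl
  rw [h]
  congr 1
  funext i
  rw [if_pos i.isLt]
end

section
/- Let (X,F) be a symmetric n-ary band. Then for all x, y ∈ X one has ℓ_x ∘ ℓ_y = ℓ_y ∘ ℓ_x = ℓ_{ℓ_x(y)} = ℓ_{ℓ_y(x)}. -/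
namespace NBP
open NaryBand
variable {X : Type*} [Inhabited X] {n : ℕ}

/-- `F` applied to the first `n` entries of a list (padded by `default`). -/
def Fl (F : (Fin n → X) → X) (l : List X) : X := F (fun i => l.getD i default)

/-- Iterated contraction value of a list. -/
def val (hn : 2 ≤ n) (F : (Fin n → X) → X) (l : List X) : X :=
  if _h : l.length < n then l.headD default
  else val hn F (Fl F (l.take n) :: l.drop n)
termination_by l.length
decreasing_by
  simp only [List.length_cons, List.length_drop]
  omega

theorem val_small (hn : 2 ≤ n) (F : (Fin n → X) → X) {l : List X} (h : l.length < n) :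
    val hn F l = l.headD default := by
  rw [val]; simp [h]

theorem val_step (hn : 2 ≤ n) (F : (Fin n → X) → X) {l : List X} (h : n ≤ l.length) :
    val hn F l = val hn F (Fl F (l.take n) :: l.drop n) := by
  conv_lhs => rw [val]
  simp [Nat.not_lt.2 h]

theorem val_cons (hn : 2 ≤ n) (F : (Fin n → X) → X) {M : List X} (L : List X)
    (hM : M.length = n) : val hn F (M ++ L) = val hn F (Fl F M :: L) := by
  have ht : (M ++ L).take n = M := by
    simp [List.take_append, hM]
  have hd : (M ++ L).drop n = L := by
    simp [List.drop_append, hM]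
  rw [val_step hn F (by simp [hM]), ht, hd]

theorem val_n (hn : 2 ≤ n) (F : (Fin n → X) → X) {M : List X} (hM : M.length = n) :
    val hn F M = Fl F M := by
  have := val_cons hn F [] hM
  simpa [val_small hn F (show ([Fl F M] : List X).length < n by simp; omega)] using this

theorem getD_append2 (pre : List X) (a b : X) (suf : List X) (i : ℕ) (d : X) :
    (pre ++ a :: b :: suf).getD i d =
      if i < pre.length then pre.getD i d
      else if i = pre.length then a
      else if i = pre.length + 1 then b
      else suf.getD (i - pre.length - 2) d := by
  rcases lt_or_ge i pre.length with h | h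
  · rw [List.getD_append _ _ _ _ h, if_pos h]
  · rw [List.getD_append_right _ _ _ _ h, if_neg (by omega)]
    rcases Nat.eq_or_lt_of_le h with h1 | h1
    · simp [← h1]
    · rw [if_neg (by omega)]
      obtain ⟨k, hk⟩ : ∃ k, i - pre.length = k + 1 := ⟨i - pre.length - 1, by omega⟩
      rw [hk, List.getD_cons_succ]
      rcases Nat.eq_zero_or_pos k with rfl | hkpos
      · rw [if_pos (by omega)]
        try simp
      · rw [if_neg (by omega)]
        obtain ⟨m, hm⟩ : ∃ m, k = m + 1 := ⟨k - 1, by omega⟩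
        rw [hm, List.getD_cons_succ]
        have hme : m = i - pre.length - 2 := by omega
        subst hme
        simp

theorem Fl_swap {F : (Fin n → X) → X} (hS : NSym F) (hn : 2 ≤ n)
    (pre : List X) (a b : X) (suf : List X) (h : pre.length + 1 < n) :
    Fl F (pre ++ a :: b :: suf) = Fl F (pre ++ b :: a :: suf) := by
  set j : Fin n := ⟨pre.length, by omega⟩
  set j' : Fin n := ⟨pre.length + 1, by omega⟩
  have key := hS (Equiv.swap j j') (fun i => (pre ++ a :: b :: suf).getD (i : ℕ) default)
  rw [Fl, Fl, ← key]
  congr 1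
  funext i
  simp only [Function.comp_apply]
  rcases eq_or_ne i j with rfl | hij
  · rw [Equiv.swap_apply_left]
    rw [getD_append2, getD_append2]
    simp [j, j']
  · rcases eq_or_ne i j' with rfl | hij'
    · rw [Equiv.swap_apply_right]
      rw [getD_append2, getD_append2]
      simp [j, j']
    · rw [Equiv.swap_apply_of_ne_of_ne hij hij']
      rw [getD_append2, getD_append2]
      have h1 : (i : ℕ) ≠ pre.length := fun hh => hij (Fin.ext hh)
      have h2 : (i : ℕ) ≠ pre.length + 1 := fun hh => hij' (Fin.ext hh)
      simp [h1, h2]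
end NBP

namespace NBP2
open NaryBand NBP
variable {X : Type*} [Inhabited X] {n : ℕ}

theorem getD_append1 (pre : List X) (a : X) (suf : List X) (i : ℕ) (d : X) :
    (pre ++ a :: suf).getD i d =
      if i < pre.length then pre.getD i d
      else if i = pre.length then a
      else suf.getD (i - pre.length - 1) d := by
  rcases lt_or_ge i pre.length with h | h
  · rw [List.getD_append _ _ _ _ h, if_pos h]
  · rw [List.getD_append_right _ _ _ _ h, if_neg (by omega)]
    rcases Nat.eq_or_lt_of_le h with h1 | h1
    · simp [← h1]
    · rw [if_neg (by omega)]
      obtain ⟨k, hk⟩ : ∃ k, i - pre.length = k + 1 := ⟨i - pre.length - 1, by omega⟩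
      rw [hk, List.getD_cons_succ]
      have : k = i - pre.length - 1 := by omega
      rw [this]
      simp

theorem contract_chain (hn : 2 ≤ n) {F : (Fin n → X) → X} (hA : NAssoc hn F)
    (i : ℕ) (hi : i ≤ n - 1) (t : Fin (2*n-1) → X) :
    F (contract F 0 hn (by omega) t) = F (contract F i hn hi t) := by
  induction i with
  | zero => rfl
  | succ k ih =>
    rw [ih (by omega)]
    exact hA k (by omega) t

theorem val_straddle_aux (hn : 2 ≤ n) {F : (Fin n → X) → X} (hA : NAssoc hn F)
    (pre : List X) (a b : X) (suf : List X) (hpre : pre.length = n - 1)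
    (hsuf : n - 2 ≤ suf.length) :
    val hn F (pre ++ a :: b :: suf) =
      val hn F (Fl F (pre ++ [Fl F (a :: b :: suf.take (n-2))]) :: suf.drop (n-2)) := by
  have e1 : pre ++ a :: b :: suf = (pre ++ [a]) ++ (b :: suf) := by simp
  rw [e1, val_cons hn F _ (by simp [hpre]; omega)]
  have e2 : (Fl F (pre ++ [a]) :: b :: suf) =
      (Fl F (pre ++ [a]) :: b :: suf.take (n-2)) ++ suf.drop (n-2) := by
    simp
  rw [e2, val_cons hn F _ (by simp [List.length_take]; omega)]
  congr 2
  -- key associativity step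
  set t : Fin (2*n-1) → X :=
    fun i => (pre ++ a :: b :: suf.take (n-2)).getD (i : ℕ) default with ht
  have claim1 : Fl F (Fl F (pre ++ [a]) :: b :: suf.take (n-2)) =
      F (contract F 0 hn (by omega) t) := by
    rw [Fl]
    congr 1
    funext j
    simp only [contract, ht]
    rw [dif_neg (Nat.not_lt_zero _)]
    rcases eq_or_ne (j : ℕ) 0 with h0 | h0
    · rw [dif_pos h0, h0]
      simp only [List.getD_cons_zero, Fl]
      congr 1
      funext k
      have hk := k.isLt
      rw [getD_append1, getD_append2]
      rcases lt_or_ge (k : ℕ) (n - 1) with hlt | hge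
      · rw [if_pos (by omega), if_pos (by simpa [hpre] using hlt)]
        simp
      · have hke : (k : ℕ) = n - 1 := by omega
        rw [if_neg (by omega), if_pos (by omega), if_neg (by omega), if_pos (by omega)]
    · rw [dif_neg h0]
      rw [getD_append2]
      have hj := j.isLt
      rw [if_neg (by omega)]
      rcases eq_or_ne (j : ℕ) 1 with h1 | h1
      · rw [if_neg (by omega), if_pos (by omega), h1]
        simp
      · rw [if_neg (by omega), if_neg (by omega)]
        obtain ⟨m, hm⟩ : ∃ m, (j : ℕ) = m + 2 := ⟨(j : ℕ) - 2, by omega⟩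
        rw [hm]
        simp only [List.getD_cons_succ]
        congr 1
        omega
  have claim2 : F (contract F (n-1) hn (le_refl _) t) =
      Fl F (pre ++ [Fl F (a :: b :: suf.take (n-2))]) := by
    rw [Fl]
    congr 1
    funext j
    simp only [contract, ht]
    have hj := j.isLt
    rcases lt_or_ge (j : ℕ) (n - 1) with hlt | hge
    · rw [dif_pos hlt, getD_append2, if_pos (by omega)]
      conv_rhs => rw [getD_append1]
      rw [if_pos (by omega)]
    · have hje : (j : ℕ) = n - 1 := by omega
      rw [dif_neg (by omega), dif_pos hje]
      conv_rhs => rw [getD_append1]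
      rw [if_neg (by omega), if_pos (by omega)]
      rw [Fl]
      congr 1
      funext k
      have hk := k.isLt
      rw [getD_append2]
      rcases eq_or_ne (k : ℕ) 0 with h0 | h0
      · rw [if_neg (by omega), if_pos (by omega), h0]
        simp
      · rcases eq_or_ne (k : ℕ) 1 with h1 | h1
        · rw [if_neg (by omega), if_neg (by omega), if_pos (by omega), h1]
          simp
        · rw [if_neg (by omega), if_neg (by omega), if_neg (by omega)]
          obtain ⟨m, hm⟩ : ∃ m, (k : ℕ) = m + 2 := ⟨(k : ℕ) - 2, by omega⟩
          rw [hm]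
          simp only [List.getD_cons_succ]
          congr 1
          omega
  rw [claim1, contract_chain hn hA (n-1) (le_refl _) t, claim2]

theorem val_straddle (hn : 2 ≤ n) {F : (Fin n → X) → X} (hA : NAssoc hn F) (hS : NSym F)
    (pre : List X) (a b : X) (suf : List X) (hpre : pre.length = n - 1)
    (hsuf : n - 2 ≤ suf.length) :
    val hn F (pre ++ a :: b :: suf) = val hn F (pre ++ b :: a :: suf) := by
  rw [val_straddle_aux hn hA pre a b suf hpre hsuf,
      val_straddle_aux hn hA pre b a suf hpre hsuf]
  have : Fl F (a :: b :: suf.take (n-2)) = Fl F (b :: a :: suf.take (n-2)) := by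
    have := Fl_swap hS hn [] a b (suf.take (n-2)) (by simpa using by omega : ([] : List X).length + 1 < n)
    simpa using this
  rw [this]

end NBP2

namespace NBP3
open NaryBand NBP NBP2
variable {X : Type*} [Inhabited X] {n : ℕ}

theorem val_swap (hn : 2 ≤ n) {F : (Fin n → X) → X} (hA : NAssoc hn F) (hS : NSym F)
    (pre : List X) (a b : X) (suf : List X)
    (hdvd : (n-1) ∣ (pre.length + suf.length + 1)) :
    val hn F (pre ++ a :: b :: suf) = val hn F (pre ++ b :: a :: suf) := by
  by_cases h1 : pre.length + 1 < n
  · -- both positions inside the first window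
    have htot : n ≤ pre.length + suf.length + 2 := by
      obtain ⟨c, hc⟩ := hdvd
      rcases c with _ | c
      · omega
      · have h' : (n-1) * (c+1) = (n-1) * c + (n-1) := by ring
        omega
    obtain ⟨m, hm⟩ : ∃ m, n - pre.length = m + 2 := ⟨n - pre.length - 2, by omega⟩
    have hsm : m ≤ suf.length := by omega
    have main : ∀ u v : X, val hn F (pre ++ u :: v :: suf) =
        val hn F (Fl F (pre ++ u :: v :: suf.take m) :: suf.drop m) := by
      intro u v
      rw [val_step hn F (by simp only [List.length_append, List.length_cons]; omega)]
      congr 2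
      · rw [List.take_append, List.take_of_length_le (by omega), hm]
        simp
      · rw [List.drop_append, List.drop_eq_nil_of_le (by omega), hm]
        simp
    rw [main a b, main b a, Fl_swap hS hn pre a b (suf.take m) h1]
  · by_cases h2 : pre.length + 1 = n
    · -- straddle
      have hsuf : n - 2 ≤ suf.length := by
        obtain ⟨c, hc⟩ := hdvd
        rcases c with _ | _ | c
        · omega
        · omega
        · have h' : (n-1) * (c+1+1) = (n-1) * c + (n-1) + (n-1) := by ring
          omega
      exact val_straddle hn hA hS pre a b suf (by omega) hsuf
    · have h3 : n ≤ pre.length := by omega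
      have main : ∀ u v : X, val hn F (pre ++ u :: v :: suf) =
          val hn F ((Fl F (pre.take n) :: pre.drop n) ++ u :: v :: suf) := by
        intro u v
        rw [val_step hn F (by simp only [List.length_append, List.length_cons]; omega)]
        congr 2
        · rw [List.take_append]
          simp [Nat.sub_eq_zero_of_le h3]
        · rw [List.drop_append]
          simp [Nat.sub_eq_zero_of_le h3]
      rw [main a b, main b a]
      exact val_swap hn hA hS (Fl F (pre.take n) :: pre.drop n) a b suf (by
        simp only [List.length_cons, List.length_drop]
        have e : pre.length - n + 1 + suf.length + 1 = (pre.length + suf.length + 1) - (n-1) := by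
          omega
        rw [e]
        exact Nat.dvd_sub hdvd dvd_rfl)
termination_by pre.length
decreasing_by simp only [List.length_cons, List.length_drop]; omega

theorem val_perm_aux (hn : 2 ≤ n) {F : (Fin n → X) → X} (hA : NAssoc hn F) (hS : NSym F)
    {l₁ l₂ : List X} (h : l₁.Perm l₂) :
    ∀ pre : List X, (n-1) ∣ (pre.length + l₁.length - 1) →
      val hn F (pre ++ l₁) = val hn F (pre ++ l₂) := by
  induction h with
  | nil => intro pre _; rfl
  | @cons x l₁ l₂ h ih =>
    intro pre hd
    have hd' : (n-1) ∣ ((pre ++ [x]).length + l₁.length - 1) := by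
      have e : (pre ++ [x]).length + l₁.length - 1 = pre.length + (x :: l₁).length - 1 := by
        simp only [List.length_append, List.length_cons, List.length_nil]
        omega
      rw [e]
      exact hd
    have := ih (pre ++ [x]) hd'
    rw [List.append_cons pre x l₁, List.append_cons pre x l₂]
    exact this
  | swap x y l =>
    intro pre hd
    refine val_swap hn hA hS pre y x l ?_
    have e : pre.length + l.length + 1 = pre.length + (y :: x :: l).length - 1 := by
      simp only [List.length_cons]
      omega
    rw [e]
    exact hd
  | trans h1 h2 ih1 ih2 =>
    intro pre hd
    rw [ih1 pre hd, ih2 pre (by rwa [← h1.length_eq])]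

theorem val_perm (hn : 2 ≤ n) {F : (Fin n → X) → X} (hA : NAssoc hn F) (hS : NSym F)
    {l₁ l₂ : List X} (h : l₁.Perm l₂) (hd : (n-1) ∣ (l₁.length - 1)) :
    val hn F l₁ = val hn F l₂ := by
  simpa using val_perm_aux hn hA hS h [] (by simpa using hd)

end NBP3

namespace NBP4
open NaryBand NBP NBP2 NBP3
variable {X : Type*} [Inhabited X] {n : ℕ}

theorem Fl_rep (hn : 2 ≤ n) {F : (Fin n → X) → X} (hI : NIdem F) (a : X) :
    Fl F (List.replicate n a) = a := by
  rw [Fl]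
  have e : (fun i : Fin n => (List.replicate n a).getD (i : ℕ) default) = fun _ => a := by
    funext i
    rw [List.getD_eq_getElem _ _ (by simpa using i.isLt), List.getElem_replicate]
  rw [e]
  exact hI a

theorem val_collapse (hn : 2 ≤ n) {F : (Fin n → X) → X} (hI : NIdem F) (a : X) (L : List X) :
    val hn F (List.replicate n a ++ L) = val hn F (a :: L) := by
  rw [val_cons hn F L (by simp), Fl_rep hn hI]

theorem val_subst (hn : 2 ≤ n) {F : (Fin n → X) → X} (hA : NAssoc hn F) (hS : NSym F)
    {M : List X} (pre suf : List X) (hM : M.length = n)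
    (hd : (n-1) ∣ (pre.length + suf.length)) :
    val hn F (pre ++ Fl F M :: suf) = val hn F (pre ++ (M ++ suf)) := by
  have hd1 : (n-1) ∣ ((pre ++ Fl F M :: suf).length - 1) := by
    simp only [List.length_append, List.length_cons]
    have e : pre.length + (suf.length + 1) - 1 = pre.length + suf.length := by omega
    rw [e]; exact hd
  rw [val_perm hn hA hS List.perm_middle hd1, ← val_cons hn F (pre ++ suf) hM]
  have hperm : (M ++ (pre ++ suf)).Perm (pre ++ (M ++ suf)) := by
    rw [← List.append_assoc, ← List.append_assoc]
    exact List.perm_append_comm.append_right suf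
  have hd2 : (n-1) ∣ ((M ++ (pre ++ suf)).length - 1) := by
    simp only [List.length_append, hM]
    have e : n + (pre.length + suf.length) - 1 = (n-1) + (pre.length + suf.length) := by omega
    rw [e]
    exact Nat.dvd_add dvd_rfl hd
  exact val_perm hn hA hS hperm hd2

theorem val_expand (hn : 2 ≤ n) {F : (Fin n → X) → X} (hA : NAssoc hn F) (hS : NSym F)
    (x y : X) :
    ∀ (k : ℕ) (L : List X), (n-1) ∣ (k + L.length - 1) →
      val hn F (List.replicate k (Fl F (List.replicate (n-1) x ++ [y])) ++ L) =
        val hn F (List.replicate (k*(n-1)) x ++ (List.replicate k y ++ L)) := by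
  intro k
  induction k with
  | zero => intro L _; simp
  | succ k ih =>
    intro L hd
    have hd0 : (n-1) ∣ (k + L.length) := by
      have e : k + L.length = k + 1 + L.length - 1 := by omega
      rw [e]; exact hd
    rw [List.replicate_succ, List.cons_append]
    have step1 := val_subst hn hA hS (M := List.replicate (n-1) x ++ [y]) []
      (List.replicate k (Fl F (List.replicate (n-1) x ++ [y])) ++ L)
      (by simp; omega) (by simpa using hd0)
    simp only [List.nil_append] at step1
    rw [step1]
    -- move the replicate-k block to the front
    have hperm1 : ((List.replicate (n-1) x ++ [y]) ++
        (List.replicate k (Fl F (List.replicate (n-1) x ++ [y])) ++ L)).Perm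
        (List.replicate k (Fl F (List.replicate (n-1) x ++ [y])) ++
          ((List.replicate (n-1) x ++ [y]) ++ L)) := by
      rw [← List.append_assoc, ← List.append_assoc]
      exact List.perm_append_comm.append_right L
    have hd1 : (n-1) ∣ ((((List.replicate (n-1) x ++ [y])) ++
        (List.replicate k (Fl F (List.replicate (n-1) x ++ [y])) ++ L)).length - 1) := by
      simp only [List.length_append, List.length_replicate, List.length_cons,
        List.length_nil]
      have e : n - 1 + (0 + 1) + (k + L.length) - 1 = (n-1) + (k + L.length) := by omega
      rw [e]
      exact Nat.dvd_add dvd_rfl hd0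
    rw [val_perm hn hA hS hperm1 hd1]
    rw [ih ((List.replicate (n-1) x ++ [y]) ++ L) (by
      simp only [List.length_append, List.length_replicate, List.length_cons, List.length_nil]
      have e : k + (n - 1 + (0 + 1) + L.length) - 1 = (n-1) + (k + L.length) := by omega
      rw [e]
      exact Nat.dvd_add dvd_rfl hd0)]
    -- final rearrangement by counting
    have hperm2 : (List.replicate (k*(n-1)) x ++
        (List.replicate k y ++ ((List.replicate (n-1) x ++ [y]) ++ L))).Perm
        (List.replicate ((k+1)*(n-1)) x ++ (List.replicate (k+1) y ++ L)) := by
      classical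
      rw [List.perm_iff_count]
      intro t
      have e : (k+1)*(n-1) = k*(n-1) + (n-1) := by rw [Nat.succ_mul]
      simp only [List.count_append, List.count_replicate, List.count_cons, List.count_nil,
        List.count_singleton, e, beq_iff_eq]
      split_ifs <;> omega
    have hd2 : (n-1) ∣ ((List.replicate (k*(n-1)) x ++
        (List.replicate k y ++ ((List.replicate (n-1) x ++ [y]) ++ L))).length - 1) := by
      simp only [List.length_append, List.length_replicate, List.length_cons, List.length_nil]
      have e : k*(n-1) + (k + (n - 1 + (0+1) + L.length)) - 1 =
          k*(n-1) + (n-1) + (k + L.length) := by omega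
      rw [e]
      exact Nat.dvd_add (Nat.dvd_add (Dvd.intro_left k rfl) dvd_rfl) hd0
    exact val_perm hn hA hS hperm2 hd2

theorem val_collapse_many (hn : 2 ≤ n) {F : (Fin n → X) → X} (hI : NIdem F) (x : X) :
    ∀ (k : ℕ) (L : List X),
      val hn F (List.replicate (k*(n-1) + (n-1)) x ++ L) =
        val hn F (List.replicate (n-1) x ++ L) := by
  intro k
  induction k with
  | zero => intro L; simp
  | succ k ih =>
    intro L
    have e : (k+1)*(n-1) + (n-1) = n + (k*(n-1) + (n-2)) := by
      rw [Nat.succ_mul]; omega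
    rw [e, List.replicate_add, List.append_assoc, val_collapse hn hI]
    have e2 : (x :: (List.replicate (k*(n-1)+(n-2)) x ++ L)) =
        List.replicate (k*(n-1)+(n-2)+1) x ++ L := by
      rw [List.replicate_succ]; simp
    rw [e2]
    have e3 : k*(n-1)+(n-2)+1 = k*(n-1)+(n-1) := by omega
    rw [e3, ih]

theorem ell_val (hn : 2 ≤ n) (F : (Fin n → X) → X) (u v : X) :
    ell F u v = val hn F (List.replicate (n-1) u ++ [v]) := by
  rw [val_n hn F (by simp; omega), ell, assocB, Fl]
  congr 1
  funext j
  rw [getD_append1]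
  simp only [List.length_replicate]
  by_cases h : (j : ℕ) < n - 1
  · rw [if_pos h, if_pos h, List.getD_eq_getElem _ _ (by simpa using h), List.getElem_replicate]
  · have hje : (j : ℕ) = n - 1 := by have := j.isLt; omega
    rw [if_neg h, if_neg h, if_pos hje]

end NBP4

open NaryBand

open NaryBand NBP NBP2 NBP3 NBP4 in
/-- In a symmetric `n`-ary band,
`ℓ_x ∘ ℓ_y = ℓ_y ∘ ℓ_x = ℓ_{ℓ_x(y)} = ℓ_{ℓ_y(x)}`. -/
theorem stmt_3 {X : Type*} {n : ℕ} (hn : 2 ≤ n) (F : (Fin n → X) → X)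
    (hA : NAssoc hn F) (hS : NSym F) (hI : NIdem F) :
    ∀ x y : X,
      ell F x ∘ ell F y = ell F y ∘ ell F x ∧
      ell F x ∘ ell F y = ell F (ell F x y) ∧
      ell F x ∘ ell F y = ell F (ell F y x) := by
  intro x y
  letI : Inhabited X := ⟨x⟩
  -- composition as a `val` of a canonical list
  have hL : ∀ u v z : X, ell F u (ell F v z) =
      val hn F (List.replicate (n-1) u ++ (List.replicate (n-1) v ++ [z])) := by
    intro u v z
    rw [ell_val hn F u (ell F v z), ell_val hn F v z,
      val_n hn F (M := List.replicate (n-1) v ++ [z]) (by simp; omega)]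
    have := val_subst hn hA hS (M := List.replicate (n-1) v ++ [z])
      (List.replicate (n-1) u) [] (by simp; omega) (by simp)
    simpa using this
  -- commutation
  have comm : ∀ u v z : X, ell F u (ell F v z) = ell F v (ell F u z) := by
    intro u v z
    rw [hL u v z, hL v u z]
    refine val_perm hn hA hS ?_ ?_
    · rw [← List.append_assoc, ← List.append_assoc]
      exact (List.perm_append_comm).append_right [z]
    · simp only [List.length_append, List.length_replicate, List.length_cons, List.length_nil]
      exact ⟨2, by omega⟩
  -- ℓ_{ℓ_u(v)} = ℓ_u ∘ ℓ_v
  have hw : ∀ u v z : X, ell F (ell F u v) z = ell F u (ell F v z) := by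
    intro u v z
    rw [ell_val hn F (ell F u v) z, ell_val hn F u v,
      val_n hn F (M := List.replicate (n-1) u ++ [v]) (by simp; omega)]
    rw [val_expand hn hA hS u v (n-1) [z] (by simp)]
    have e : (n-1)*(n-1) = (n-2)*(n-1) + (n-1) := by
      have h2 : n - 1 = n - 2 + 1 := by omega
      calc (n-1)*(n-1) = (n-2+1)*(n-1) := by rw [← h2]
        _ = (n-2)*(n-1) + (n-1) := by rw [Nat.succ_mul]
    rw [e, val_collapse_many hn hI u (n-2) (List.replicate (n-1) v ++ [z]), ← hL u v z]
  refine ⟨?_, ?_, ?_⟩ <;> funext z <;> simp only [Function.comp_apply]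
  · exact comm x y z
  · exact (hw x y z).symm
  · rw [comm x y z]
    exact (hw y x z).symm
end

section
/- Let (X,F) be a symmetric n-ary band and B its associated binary operation. Then (X,B) is a right normal band: B is associative, B(x,x) = x for all x ∈ X, and B(B(x,y),z) = B(B(y,x),z) for all x, y, z ∈ X. -/
open NaryBand

section Aux
variable {X : Type*} {n : ℕ}

theorem finval {m a : ℕ} (h : a < m) : ((⟨a, h⟩ : Fin m) : ℕ) = a := rfl

def Tt (hn : 2 ≤ n) (F : (Fin n → X) → X) (u : Fin (2 * n - 1) → X) : X :=
  F (contract F 0 hn (Nat.zero_le _) u)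

theorem slide (hn : 2 ≤ n) (F : (Fin n → X) → X) (hA : NAssoc hn F) :
    ∀ (i : ℕ) (hi : i ≤ n - 1) (u : Fin (2 * n - 1) → X),
      Tt hn F u = F (contract F i hn hi u) := by
  intro i
  induction i with
  | zero => intro _ u; rfl
  | succ i ih =>
    intro hi u
    rw [ih (by omega) u]
    exact hA i hi u

theorem expand (hn : 2 ≤ n) (F : (Fin n → X) → X) (hA : NAssoc hn F)
    (p : ℕ) (hp : p ≤ n - 1) (t w : Fin n → X) (ht : t ⟨p, by omega⟩ = F w) :
    F t = Tt hn F (fun j =>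
      if h1 : (j : ℕ) < p then t ⟨(j : ℕ), by omega⟩
      else if h2 : (j : ℕ) < p + n then w ⟨(j : ℕ) - p, by omega⟩
      else t ⟨(j : ℕ) - (n - 1), by have := j.isLt; omega⟩) := by
  rw [slide hn F hA p hp]
  congr 1
  funext j
  have hj := j.isLt
  simp only [contract]
  by_cases h1 : (j : ℕ) < p
  · rw [dif_pos h1, dif_pos h1]
  · rw [dif_neg h1]
    by_cases h2 : (j : ℕ) = p
    · rw [dif_pos h2]
      have he : (fun k : Fin n => if h1 : (p + (k : ℕ)) < p then t ⟨p + (k:ℕ), by omega⟩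
          else if h2 : p + (k : ℕ) < p + n then w ⟨p + (k : ℕ) - p, by omega⟩
          else t ⟨p + (k : ℕ) - (n - 1), by have := k.isLt; omega⟩) = w := by
        funext k
        rw [dif_neg (by omega), dif_pos (by have := k.isLt; omega)]
        congr 1
        exact Fin.ext (by simp)
      rw [he, ← ht]
      congr 1
      exact Fin.ext (by simp [h2])
    · rw [dif_neg h2, dif_neg (by omega), dif_neg (by omega)]
      congr 1
      exact Fin.ext (by simp; omega)
theorem adj (hn : 2 ≤ n) (F : (Fin n → X) → X) (hA : NAssoc hn F) (hS : NSym F)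
    (a : Fin (2 * n - 1)) (ha : (a : ℕ) + 1 < 2 * n - 1) (u : Fin (2 * n - 1) → X) :
    Tt hn F (u ∘ Equiv.swap a ⟨(a : ℕ) + 1, ha⟩) = Tt hn F u := by
  set j := (a : ℕ) with hjdef
  set i := min j (n - 1) with hidef
  have hi : i ≤ n - 1 := min_le_right _ _
  have hij : i ≤ j := min_le_left _ _
  have hin : j + 1 ≤ i + n - 1 := by omega
  rw [slide hn F hA i hi, slide hn F hA i hi]
  congr 1
  funext p
  have hp := p.isLt
  simp only [contract]
  by_cases h1 : (p : ℕ) < i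
  · rw [dif_pos h1, dif_pos h1]
    show u (Equiv.swap a ⟨j + 1, ha⟩ ⟨(p : ℕ), _⟩) = _
    rw [Equiv.swap_apply_of_ne_of_ne (Fin.ne_of_val_ne (show (p:ℕ) ≠ j by omega))
      (Fin.ne_of_val_ne (show (p:ℕ) ≠ j + 1 by omega))]
  · by_cases h2 : (p : ℕ) = i
    · rw [dif_neg h1, dif_pos h2, dif_neg h1, dif_pos h2]
      have hd : j - i < n := by omega
      have hd1 : j - i + 1 < n := by omega
      rw [← hS (Equiv.swap (⟨j - i, hd⟩ : Fin n) ⟨j - i + 1, hd1⟩)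
        (fun k => u ⟨i + (k : ℕ), by have := k.isLt; omega⟩)]
      congr 1
      funext k
      show u (Equiv.swap a ⟨j + 1, ha⟩ ⟨i + (k : ℕ), _⟩)
        = u ⟨i + ((Equiv.swap (⟨j - i, hd⟩ : Fin n) ⟨j - i + 1, hd1⟩ k : Fin n) : ℕ), _⟩
      by_cases hk : (k : ℕ) = j - i
      · have hk' : k = ⟨j - i, hd⟩ := Fin.ext hk
        rw [hk', Equiv.swap_apply_left]
        have h3 : (⟨i + ((⟨j - i, hd⟩ : Fin n) : ℕ), by omega⟩ : Fin (2 * n - 1)) = a :=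
          Fin.ext (show i + (j - i) = j by omega)
        rw [h3, Equiv.swap_apply_left]
        exact congrArg u (Fin.ext (show j + 1 = i + (j - i + 1) by omega))
      · by_cases hk2 : (k : ℕ) = j - i + 1
        · have hk' : k = ⟨j - i + 1, hd1⟩ := Fin.ext hk2
          rw [hk', Equiv.swap_apply_right]
          have h3 : (⟨i + ((⟨j - i + 1, hd1⟩ : Fin n) : ℕ), by omega⟩ : Fin (2 * n - 1))
              = ⟨j + 1, ha⟩ := Fin.ext (show i + (j - i + 1) = j + 1 by omega)
          rw [h3, Equiv.swap_apply_right]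
          exact congrArg u (Fin.ext (show j = i + (j - i) by omega))
        · rw [Equiv.swap_apply_of_ne_of_ne (show k ≠ ⟨j - i, hd⟩ from Fin.ne_of_val_ne hk)
            (show k ≠ ⟨j - i + 1, hd1⟩ from Fin.ne_of_val_ne hk2)]
          rw [Equiv.swap_apply_of_ne_of_ne (Fin.ne_of_val_ne (show i + (k:ℕ) ≠ j by omega))
            (Fin.ne_of_val_ne (show i + (k:ℕ) ≠ j + 1 by omega))]
    · rw [dif_neg h1, dif_neg h2, dif_neg h1, dif_neg h2]
      show u (Equiv.swap a ⟨j + 1, ha⟩ ⟨(p : ℕ) + n - 1, _⟩) = _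
      rw [Equiv.swap_apply_of_ne_of_ne
        (Fin.ne_of_val_ne (show (p:ℕ) + n - 1 ≠ j by omega))
        (Fin.ne_of_val_ne (show (p:ℕ) + n - 1 ≠ j + 1 by omega))]

theorem swap3 {α : Type*} [DecidableEq α] {a b c : α} (hab : a ≠ b) (hac : a ≠ c)
    (hbc : b ≠ c) (x : α) :
    Equiv.swap a c (Equiv.swap c b (Equiv.swap a c x)) = Equiv.swap a b x := by
  by_cases hxa : x = a
  · subst hxa
    simp only [Equiv.swap_apply_def]
    split_ifs <;> simp_all
  · by_cases hxb : x = b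
    · subst hxb
      simp only [Equiv.swap_apply_def]
      split_ifs <;> simp_all
    · by_cases hxc : x = c
      · subst hxc
        simp only [Equiv.swap_apply_def]
        split_ifs <;> simp_all
      · simp only [Equiv.swap_apply_def]
        split_ifs <;> simp_all

theorem swap_inv (hn : 2 ≤ n) (F : (Fin n → X) → X) (hA : NAssoc hn F) (hS : NSym F) :
    ∀ (d : ℕ) (a b : Fin (2 * n - 1)), (b : ℕ) = (a : ℕ) + d + 1 →
      ∀ u : Fin (2 * n - 1) → X, Tt hn F (u ∘ Equiv.swap a b) = Tt hn F u := by
  intro d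
  induction d using Nat.strong_induction_on with
  | _ d ih =>
    intro a b hb u
    match d, ih with
    | 0, _ =>
      have ha : (a : ℕ) + 1 < 2 * n - 1 := by have := b.isLt; omega
      have hb' : b = ⟨(a : ℕ) + 1, ha⟩ := Fin.ext (by simpa using hb)
      rw [hb']
      exact adj hn F hA hS a ha u
    | d + 1, ih =>
      have hbi := b.isLt
      have hc : (a : ℕ) + 1 < 2 * n - 1 := by omega
      set c : Fin (2 * n - 1) := ⟨(a : ℕ) + 1, hc⟩ with hcdef
      have hab : a ≠ b := Fin.ne_of_val_ne (by omega)
      have hac : a ≠ c := Fin.ne_of_val_ne (by simp [hcdef])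
      have hbc : b ≠ c := Fin.ne_of_val_ne (by simp [hcdef]; omega)
      have hfun : u ∘ ⇑(Equiv.swap a b)
          = ((u ∘ ⇑(Equiv.swap a c)) ∘ ⇑(Equiv.swap c b)) ∘ ⇑(Equiv.swap a c) := by
        funext x
        exact (congrArg u (swap3 hab hac hbc x)).symm
      rw [hfun]
      rw [adj hn F hA hS a hc ((u ∘ ⇑(Equiv.swap a c)) ∘ ⇑(Equiv.swap c b))]
      rw [ih d (by omega) c b (by simp [hcdef]; omega) (u ∘ ⇑(Equiv.swap a c))]
      exact adj hn F hA hS a hc u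


/-- `B(x,y)` with the single `y` moved to the front. -/
theorem aswap (hn : 2 ≤ n) (F : (Fin n → X) → X) (hS : NSym F) (x y : X) :
    F (fun j : Fin n => if (j : ℕ) = 0 then y else x) = assocB F x y := by
  have h0 : 0 < n := by omega
  have hn1 : n - 1 < n := by omega
  have key : (fun j : Fin n => if (j : ℕ) = 0 then y else x)
      = (fun j : Fin n => if (j : ℕ) < n - 1 then x else y)
          ∘ ⇑(Equiv.swap ⟨0, h0⟩ ⟨n - 1, hn1⟩) := by
    funext j
    show _ = (fun j : Fin n => if (j : ℕ) < n - 1 then x else y)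
      ((Equiv.swap (⟨0, h0⟩ : Fin n) ⟨n - 1, hn1⟩) j)
    by_cases hj0 : (j : ℕ) = 0
    · have hj : j = ⟨0, h0⟩ := Fin.ext hj0
      rw [hj, Equiv.swap_apply_left]
      show (if (0 : ℕ) = 0 then y else x) = if (n - 1 : ℕ) < n - 1 then x else y
      rw [if_pos rfl, if_neg (by omega)]
    · by_cases hj1 : (j : ℕ) = n - 1
      · have hj : j = ⟨n - 1, hn1⟩ := Fin.ext hj1
        rw [hj, Equiv.swap_apply_right]
        show (if (n - 1 : ℕ) = 0 then y else x) = if (0 : ℕ) < n - 1 then x else y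
        rw [if_neg (by omega), if_pos (by omega)]
      · rw [Equiv.swap_apply_of_ne_of_ne (Fin.ne_of_val_ne hj0) (Fin.ne_of_val_ne hj1)]
        show (if (j : ℕ) = 0 then y else x) = if (j : ℕ) < n - 1 then x else y
        rw [if_neg hj0, if_pos (by have := j.isLt; omega)]
  rw [key, hS]
  rfl

theorem Fconst (F : (Fin n → X) → X) (hI : NIdem F) (g : Fin n → X) (c : X)
    (hg : ∀ k, g k = c) : F g = c := by
  rw [show g = (fun _ => c) from funext hg]
  exact hI c

/-- `B(x, B(x,y)) = B(x,y)`. -/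
theorem C1 (hn : 2 ≤ n) (F : (Fin n → X) → X) (hA : NAssoc hn F) (hI : NIdem F) (x y : X) :
    assocB F x (assocB F x y) = assocB F x y := by
  have ht : (fun j : Fin n => if (j : ℕ) < n - 1 then x else assocB F x y) ⟨n - 1, by omega⟩
      = F (fun j : Fin n => if (j : ℕ) < n - 1 then x else y) := by
    beta_reduce
    try simp only [finval]
    rw [if_neg (Nat.lt_irrefl _)]
    rfl
  have h := expand hn F hA (n - 1) le_rfl
      (fun j : Fin n => if (j : ℕ) < n - 1 then x else assocB F x y)
      (fun j : Fin n => if (j : ℕ) < n - 1 then x else y) ht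
  show F _ = _
  rw [h]
  show F (contract F 0 hn _ _) = F (fun j : Fin n => if (j : ℕ) < n - 1 then x else y)
  congr 1
  funext p
  have hp := p.isLt
  simp only [contract]
  by_cases h2 : (p : ℕ) = 0
  · rw [dif_neg (by omega), dif_pos h2]
    have hx : (if (p : ℕ) < n - 1 then x else y) = x := if_pos (by omega)
    rw [hx]
    refine Fconst F hI _ x fun k => ?_
    have hk := k.isLt
    beta_reduce
    try simp only [finval]
    split_ifs <;> first | rfl | contradiction | omega
  · rw [dif_neg (by omega), dif_neg h2]
    beta_reduce
    try simp only [finval]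
    split_ifs <;> first | rfl | contradiction | omega

/-- `B(y, B(x,y)) = B(x,y)`. -/
theorem C2 (hn : 2 ≤ n) (F : (Fin n → X) → X) (hA : NAssoc hn F) (hS : NSym F)
    (hI : NIdem F) (x y : X) :
    assocB F y (assocB F x y) = assocB F x y := by
  have ht : (fun j : Fin n => if (j : ℕ) < n - 1 then y else assocB F x y) ⟨n - 1, by omega⟩
      = F (fun j : Fin n => if (j : ℕ) = 0 then y else x) := by
    beta_reduce
    try simp only [finval]
    rw [if_neg (Nat.lt_irrefl _)]
    exact (aswap hn F hS x y).symm
  have h := expand hn F hA (n - 1) le_rfl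
      (fun j : Fin n => if (j : ℕ) < n - 1 then y else assocB F x y)
      (fun j : Fin n => if (j : ℕ) = 0 then y else x) ht
  show F _ = _
  rw [h]
  show F (contract F 0 hn _ _) = assocB F x y
  rw [← aswap hn F hS x y]
  congr 1
  funext p
  have hp := p.isLt
  simp only [contract]
  by_cases h2 : (p : ℕ) = 0
  · rw [dif_neg (by omega), dif_pos h2]
    have hx : (if (p : ℕ) = 0 then y else x) = y := if_pos h2
    rw [hx]
    refine Fconst F hI _ y fun k => ?_
    have hk := k.isLt
    beta_reduce
    try simp only [finval]
    split_ifs <;> first | rfl | contradiction | omega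
  · rw [dif_neg (by omega), dif_neg h2]
    beta_reduce
    try simp only [finval]
    split_ifs <;> first | rfl | contradiction | omega


theorem expand' (hn : 2 ≤ n) (F : (Fin n → X) → X) (hA : NAssoc hn F)
    (p : ℕ) (hp : p ≤ n - 1) (t w : Fin n → X) (u : Fin (2 * n - 1) → X)
    (ht : t ⟨p, by omega⟩ = F w)
    (hu : ∀ j : Fin (2 * n - 1),
      u j = if h1 : (j : ℕ) < p then t ⟨(j : ℕ), by omega⟩
        else if h2 : (j : ℕ) < p + n then w ⟨(j : ℕ) - p, by omega⟩
        else t ⟨(j : ℕ) - (n - 1), by have := j.isLt; omega⟩) :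
    F t = Tt hn F u := by
  rw [show u = _ from funext hu]
  exact expand hn F hA p hp t w ht

def ublk (x y z : X) : Fin (2 * n - 1) → X :=
  fun j => if (j : ℕ) < n - 1 then x else if (j : ℕ) < 2 * n - 2 then y else z

/-- `B(x, B(y,z))` equals `Tt` of the sorted block tuple. -/
theorem rrep (hn : 2 ≤ n) (F : (Fin n → X) → X) (hA : NAssoc hn F) (x y z : X) :
    assocB F x (assocB F y z) = Tt hn F (ublk x y z) := by
  have ht : (fun j : Fin n => if (j : ℕ) < n - 1 then x else assocB F y z) ⟨n - 1, by omega⟩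
      = F (fun j : Fin n => if (j : ℕ) < n - 1 then y else z) := by
    beta_reduce
    try simp only [finval]
    rw [if_neg (Nat.lt_irrefl _)]
    rfl
  exact expand' hn F hA (n - 1) le_rfl _ _ (ublk x y z) ht fun j => by
    have hj := j.isLt
    simp only [ublk]
    beta_reduce
    try simp only [finval]
    split_ifs <;> first | rfl | contradiction | omega

/-- The main chain: `F(a^{k+1}, y^{n-2-k}, z) = Tt (x^{n-1} y^{n-1} z)` where `a = B(x,y)`. -/
theorem chain (hn : 2 ≤ n) (F : (Fin n → X) → X) (hA : NAssoc hn F) (hS : NSym F)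
    (hI : NIdem F) (x y z : X) :
    ∀ k, k ≤ n - 2 →
      F (fun j : Fin n => if (j : ℕ) < k + 1 then assocB F x y
          else if (j : ℕ) < n - 1 then y else z) = Tt hn F (ublk x y z) := by
  intro k
  induction k with
  | zero =>
    intro _
    have ht : (fun j : Fin n => if (j : ℕ) < 0 + 1 then assocB F x y
        else if (j : ℕ) < n - 1 then y else z) ⟨0, by omega⟩
        = F (fun j : Fin n => if (j : ℕ) < n - 1 then x else y) := by
      beta_reduce
      try simp only [finval]
      rw [if_pos (Nat.lt_succ_self 0)]
      rfl
    exact expand' hn F hA 0 (by omega) _ _ (ublk x y z) ht fun j => by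
      have hj := j.isLt
      simp only [ublk]
      beta_reduce
      try simp only [finval]
      split_ifs <;> first | rfl | contradiction | omega
  | succ k ih =>
    intro hk
    have ht : (fun j : Fin n => if (j : ℕ) < k + 1 + 1 then assocB F x y
        else if (j : ℕ) < n - 1 then y else z) ⟨0, by omega⟩
        = F (fun j : Fin n => if (j : ℕ) = 0 then y else x) := by
      beta_reduce
      try simp only [finval]
      rw [if_pos (Nat.succ_pos (k + 1))]
      exact (aswap hn F hS x y).symm
    have h := expand' hn F hA 0 (by omega)
      (fun j : Fin n => if (j : ℕ) < k + 1 + 1 then assocB F x y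
        else if (j : ℕ) < n - 1 then y else z)
      (fun j : Fin n => if (j : ℕ) = 0 then y else x)
      (fun j : Fin (2 * n - 1) => if (j : ℕ) = 0 then y else if (j : ℕ) < n then x
        else if (j : ℕ) < n + k + 1 then assocB F x y
        else if (j : ℕ) < 2 * n - 2 then y else z) ht (fun j => by
        have hj := j.isLt
        beta_reduce
        try simp only [finval]
        split_ifs <;> first | rfl | contradiction | omega )
    rw [h, slide hn F hA 1 (by omega)]
    have hstep : contract F 1 hn (by omega)
        (fun j : Fin (2 * n - 1) => if (j : ℕ) = 0 then y else if (j : ℕ) < n then x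
          else if (j : ℕ) < n + k + 1 then assocB F x y
          else if (j : ℕ) < 2 * n - 2 then y else z)
        = fun j : Fin n => if (j : ℕ) = 0 then y
            else if (j : ℕ) < k + 2 then assocB F x y
            else if (j : ℕ) < n - 1 then y else z := by
      funext q
      have hq := q.isLt
      simp only [contract]
      by_cases h1 : (q : ℕ) < 1
      · rw [dif_pos h1]
        beta_reduce
        try simp only [finval]
        split_ifs <;> first | rfl | contradiction | omega
      · by_cases h2 : (q : ℕ) = 1
        · rw [dif_neg h1, dif_pos h2]
          have hwin : (fun m : Fin n =>
              (fun j : Fin (2 * n - 1) => if (j : ℕ) = 0 then y else if (j : ℕ) < n then x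
                else if (j : ℕ) < n + k + 1 then assocB F x y
                else if (j : ℕ) < 2 * n - 2 then y else z)
                ⟨1 + (m : ℕ), by have := m.isLt; omega⟩)
              = fun m : Fin n => if (m : ℕ) < n - 1 then x else assocB F x y := by
            funext m
            have hm := m.isLt
            beta_reduce
            try simp only [finval]
            split_ifs <;> first | rfl | contradiction | omega
          rw [hwin]
          have hc1 : F (fun m : Fin n => if (m : ℕ) < n - 1 then x else assocB F x y)
              = assocB F x y := C1 hn F hA hI x y
          rw [hc1]
          beta_reduce
          try simp only [finval]
          rw [if_neg (by omega), if_pos (by omega)]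
        · rw [dif_neg h1, dif_neg h2]
          beta_reduce
          try simp only [finval]
          split_ifs <;> first | rfl | contradiction | omega
    rw [hstep]
    have h0n : (0 : ℕ) < n := by omega
    have hk1n : k + 1 < n := by omega
    have hperm : (fun j : Fin n => if (j : ℕ) = 0 then y
          else if (j : ℕ) < k + 2 then assocB F x y
          else if (j : ℕ) < n - 1 then y else z)
        = (fun j : Fin n => if (j : ℕ) < k + 1 then assocB F x y
            else if (j : ℕ) < n - 1 then y else z)
          ∘ ⇑(Equiv.swap ⟨0, h0n⟩ ⟨k + 1, hk1n⟩) := by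
      funext q
      rw [Function.comp_apply]
      by_cases hq0 : (q : ℕ) = 0
      · have : q = ⟨0, h0n⟩ := Fin.ext hq0
        rw [this, Equiv.swap_apply_left]
        beta_reduce
        try simp only [finval]
        split_ifs <;> first | rfl | contradiction | omega
      · by_cases hq1 : (q : ℕ) = k + 1
        · have : q = ⟨k + 1, hk1n⟩ := Fin.ext hq1
          rw [this, Equiv.swap_apply_right]
          beta_reduce
          try simp only [finval]
          split_ifs <;> first | rfl | contradiction | omega
        · rw [Equiv.swap_apply_of_ne_of_ne (Fin.ne_of_val_ne hq0) (Fin.ne_of_val_ne hq1)]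
          have hq := q.isLt
          beta_reduce
          try simp only [finval]
          split_ifs <;> first | rfl | contradiction | omega
    rw [hperm, hS]
    exact ih (by omega)

/-- `B(B(x,y), z)` also equals `Tt` of the sorted block tuple. -/
theorem lrep (hn : 2 ≤ n) (F : (Fin n → X) → X) (hA : NAssoc hn F) (hS : NSym F)
    (hI : NIdem F) (x y z : X) :
    assocB F (assocB F x y) z = Tt hn F (ublk x y z) := by
  have hch := chain hn F hA hS hI x y z (n - 2) le_rfl
  have heq : (fun j : Fin n => if (j : ℕ) < n - 2 + 1 then assocB F x y
      else if (j : ℕ) < n - 1 then y else z)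
      = fun j : Fin n => if (j : ℕ) < n - 1 then assocB F x y else z := by
    funext j
    have := j.isLt
    split_ifs <;> first | rfl | contradiction | omega
  rw [heq] at hch
  exact hch

/-- Swapping the two blocks `x^{n-1}` and `y^{n-1}` does not change `Tt`. -/
theorem bs (hn : 2 ≤ n) (F : (Fin n → X) → X) (hA : NAssoc hn F) (hS : NSym F)
    (x y z : X) :
    ∀ k, k ≤ n - 1 →
      Tt hn F (fun j : Fin (2 * n - 1) => if (j : ℕ) < k then y
        else if (j : ℕ) < n - 1 then x else if (j : ℕ) < n - 1 + k then x
        else if (j : ℕ) < 2 * n - 2 then y else z) = Tt hn F (ublk x y z) := by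
  intro k
  induction k with
  | zero =>
    intro _
    refine congrArg (Tt hn F) (funext fun j => ?_)
    have hj := j.isLt
    simp only [ublk]
    beta_reduce
    try simp only [finval]
    split_ifs <;> first | rfl | contradiction | omega
  | succ k ih =>
    intro hk
    have hka : (k : ℕ) < 2 * n - 1 := by omega
    have hkb : k + n - 1 < 2 * n - 1 := by omega
    have hcomp : (fun j : Fin (2 * n - 1) => if (j : ℕ) < k + 1 then y
          else if (j : ℕ) < n - 1 then x else if (j : ℕ) < n - 1 + (k + 1) then x
          else if (j : ℕ) < 2 * n - 2 then y else z)
        = (fun j : Fin (2 * n - 1) => if (j : ℕ) < k then y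
            else if (j : ℕ) < n - 1 then x else if (j : ℕ) < n - 1 + k then x
            else if (j : ℕ) < 2 * n - 2 then y else z)
          ∘ ⇑(Equiv.swap ⟨k, hka⟩ ⟨k + n - 1, hkb⟩) := by
      funext q
      rw [Function.comp_apply]
      by_cases hq0 : (q : ℕ) = k
      · have hq : q = ⟨k, hka⟩ := Fin.ext hq0
        rw [hq, Equiv.swap_apply_left]
        beta_reduce
        try simp only [finval]
        split_ifs <;> first | rfl | contradiction | omega
      · by_cases hq1 : (q : ℕ) = k + n - 1
        · have hq : q = ⟨k + n - 1, hkb⟩ := Fin.ext hq1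
          rw [hq, Equiv.swap_apply_right]
          beta_reduce
          try simp only [finval]
          split_ifs <;> first | rfl | contradiction | omega
        · rw [Equiv.swap_apply_of_ne_of_ne (Fin.ne_of_val_ne hq0) (Fin.ne_of_val_ne hq1)]
          have hq := q.isLt
          beta_reduce
          try simp only [finval]
          split_ifs <;> first | rfl | contradiction | omega
    rw [hcomp, swap_inv hn F hA hS (n - 2) ⟨k, hka⟩ ⟨k + n - 1, hkb⟩
      (by simp only [finval]; omega) _]
    exact ih (by omega)

end Aux

/-- The binary operation associated with a symmetric `n`-ary band
is a right normal band: associative, idempotent, and `B(B(x,y),z) = B(B(y,x),z)`. -/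
theorem stmt_4 {X : Type*} {n : ℕ} (hn : 2 ≤ n) (F : (Fin n → X) → X)
    (hA : NAssoc hn F) (hS : NSym F) (hI : NIdem F) :
    (∀ x y z : X, assocB F (assocB F x y) z = assocB F x (assocB F y z)) ∧
    (∀ x : X, assocB F x x = x) ∧
    (∀ x y z : X, assocB F (assocB F x y) z = assocB F (assocB F y x) z) := by
  refine ⟨fun x y z => ?_, fun x => ?_, fun x y z => ?_⟩
  · rw [lrep hn F hA hS hI x y z]
    exact (rrep hn F hA x y z).symm
  · show F _ = x
    refine Fconst F hI _ x fun k => ?_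
    beta_reduce
    split_ifs <;> rfl
  · rw [lrep hn F hA hS hI x y z, lrep hn F hA hS hI y x z]
    have hbs := bs hn F hA hS x y z (n - 1) le_rfl
    have he : (fun j : Fin (2 * n - 1) => if (j : ℕ) < n - 1 then y
          else if (j : ℕ) < n - 1 then x else if (j : ℕ) < n - 1 + (n - 1) then x
          else if (j : ℕ) < 2 * n - 2 then y else z) = ublk y x z := by
      funext j
      have := j.isLt
      simp only [ublk]
      split_ifs <;> first | rfl | contradiction | omega
    rw [he] at hbs
    exact hbs.symm
end

section
/- Let (X,F) be a symmetric n-ary band. Then the set L = {ℓ_x : x ∈ X} of self-maps of X is closed under composition, and composition of maps restricted to L is associative, commutative and idempotent; that is, (L, ∘) is a semilattice. -/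
open NaryBand

section Aux

variable {X : Type*} {n : ℕ}

private lemma contract_chain (hn : 2 ≤ n) (F : (Fin n → X) → X) (hA : NAssoc hn F)
    (t : Fin (2 * n - 1) → X) (i : ℕ) : ∀ (hi : i ≤ n - 1),
    F (contract F i hn hi t) = F (contract F 0 hn (by omega) t) := by
  induction i with
  | zero => intro _; rfl
  | succ k ih =>
      intro hi
      rw [← hA k (by omega) t]
      exact ih (by omega)

private lemma key0 (hn : 2 ≤ n) (F : (Fin n → X) → X) (hA : NAssoc hn F)
    (x : X) (s : Fin n → X) :
    F (Function.update s ⟨0, by omega⟩ (assocB F x (s ⟨0, by omega⟩))) = assocB F x (F s) := by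
  set t : Fin (2 * n - 1) → X := fun j =>
    if _h : (j : ℕ) < n - 1 then x else s ⟨(j : ℕ) - (n - 1), by have := j.isLt; omega⟩ with ht
  have h1 : contract F 0 hn (by omega) t
      = Function.update s ⟨0, by omega⟩ (assocB F x (s ⟨0, by omega⟩)) := by
    funext j
    rcases j with ⟨jv, hj⟩
    rw [Function.update_apply]
    simp only [contract, ht]
    rcases Nat.eq_zero_or_pos jv with h0 | hpos
    · subst h0
      rw [dif_neg (by omega), dif_pos rfl, if_pos (by exact Fin.ext rfl)]
      show F _ = assocB F x (s ⟨0, by omega⟩)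
      unfold assocB
      congr 1
      funext k
      by_cases hk : (k : ℕ) < n - 1
      · rw [dif_pos (by omega), if_pos hk]
      · rw [dif_neg (by omega), if_neg hk]
        congr 1
        exact Fin.ext (by simp; omega)
    · rw [dif_neg (by omega), dif_neg (by omega), if_neg (by
        intro h; exact absurd (congrArg Fin.val h) (by simp; omega))]
      rw [dif_neg (by omega)]
      congr 1
      exact Fin.ext (by simp; omega)
  have h2 : contract F (n - 1) hn (le_refl _) t
      = fun j : Fin n => if (j : ℕ) < n - 1 then x else F s := by
    funext j
    rcases j with ⟨jv, hj⟩
    simp only [contract, ht]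
    by_cases hjn : jv < n - 1
    · rw [dif_pos hjn, if_pos hjn, dif_pos hjn]
    · have hje : jv = n - 1 := by omega
      rw [dif_neg hjn, dif_pos hje, if_neg hjn]
      congr 1
      funext k
      rw [dif_neg (by omega)]
      congr 1
      exact Fin.ext (by simp)
  have hc := contract_chain hn F hA t (n - 1) (le_refl _)
  rw [h1, h2] at hc
  exact hc.symm

private lemma keyi (hn : 2 ≤ n) (F : (Fin n → X) → X) (hA : NAssoc hn F) (hS : NSym F)
    (x : X) (s : Fin n → X) (i : Fin n) :
    F (Function.update s i (assocB F x (s i))) = assocB F x (F s) := by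
  set z0 : Fin n := ⟨0, by omega⟩ with hz0
  set σ : Equiv.Perm (Fin n) := Equiv.swap z0 i with hσ
  have h1 := key0 hn F hA x (s ∘ σ)
  have hσ0 : σ z0 = i := Equiv.swap_apply_left z0 i
  have h2 : (s ∘ σ) z0 = s i := by simp [hσ0]
  rw [h2] at h1
  have h3 : Function.update (s ∘ ⇑σ) z0 (assocB F x (s i))
      = Function.update s i (assocB F x (s i)) ∘ ⇑σ := by
    rw [Function.update_comp_equiv]
    congr 1
    rw [show σ.symm i = z0 by rw [← hσ0]; exact σ.symm_apply_apply z0]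
  rw [h3, hS σ, hS σ] at h1
  exact h1

private lemma assocB_self (F : (Fin n → X) → X) (hI : NIdem F) (x : X) :
    assocB F x x = x := by
  unfold assocB
  simpa using hI x

private lemma ell_idem (hn : 2 ≤ n) (F : (Fin n → X) → X) (hA : NAssoc hn F)
    (hI : NIdem F) (x z : X) :
    assocB F x (assocB F x z) = assocB F x z := by
  set s : Fin n → X := fun j => if (j : ℕ) < n - 1 then x else z with hs
  have hFs : F s = assocB F x z := rfl
  have hs0 : s ⟨0, by omega⟩ = x := by
    rw [hs]; exact if_pos (show ((⟨0, by omega⟩ : Fin n) : ℕ) < n - 1 by simp; omega)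
  have hupd : Function.update s ⟨0, by omega⟩ x = s := by
    rw [← hs0]; exact Function.update_eq_self _ s
  have h := key0 hn F hA x s
  rw [hs0, assocB_self F hI, hupd, hFs] at h
  exact h.symm

private lemma ell_comm (hn : 2 ≤ n) (F : (Fin n → X) → X) (hA : NAssoc hn F)
    (hS : NSym F) (hI : NIdem F) (x y z : X) :
    assocB F x (assocB F y z) = assocB F y (assocB F x z) := by
  set z0 : Fin n := ⟨0, by omega⟩ with hz0
  set z1 : Fin n := ⟨1, by omega⟩ with hz1
  have hne : z1 ≠ z0 := by
    intro h; exact absurd (congrArg Fin.val h) (by simp [hz0, hz1])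
  set c : Fin n → X := fun _ => z with hc
  have hFc : F c = z := hI z
  have step : ∀ a b : X,
      assocB F a (assocB F b z) =
        F (Function.update (Function.update c z0 (assocB F b z)) z1 (assocB F a z)) := by
    intro a b
    have h1 := key0 hn F hA b c
    rw [show c ⟨0, by omega⟩ = z from rfl, hFc] at h1
    have h2 := keyi hn F hA hS a (Function.update c z0 (assocB F b z)) z1
    rw [Function.update_of_ne hne, show c z1 = z from rfl, h1] at h2
    exact h2.symm
  have hperm : ∀ A B : X,
      (Function.update (Function.update c z0 A) z1 B) ∘ ⇑(Equiv.swap z0 z1)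
        = Function.update (Function.update c z0 B) z1 A := by
    intro A B
    funext j
    simp only [Function.comp_apply]
    rcases eq_or_ne j z0 with h | h
    · subst h
      rw [Equiv.swap_apply_left, Function.update_self,
        Function.update_of_ne (Ne.symm hne), Function.update_self]
    · rcases eq_or_ne j z1 with h2 | h2
      · subst h2
        rw [Equiv.swap_apply_right, Function.update_of_ne (Ne.symm hne),
          Function.update_self, Function.update_self]
      · rw [Equiv.swap_apply_of_ne_of_ne h h2, Function.update_of_ne h2,
          Function.update_of_ne h, Function.update_of_ne h2, Function.update_of_ne h]
  rw [step x y, step y x,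
    ← hS (Equiv.swap z0 z1)
      (Function.update (Function.update c z0 (assocB F y z)) z1 (assocB F x z)),
    hperm]

private lemma ell_absorb (hn : 2 ≤ n) (F : (Fin n → X) → X) (hA : NAssoc hn F)
    (hS : NSym F) (hI : NIdem F) (x y z : X) :
    assocB F (assocB F x y) z = assocB F x (assocB F y z) := by
  set w : X := assocB F x y with hw
  set tup : ℕ → Fin n → X :=
    fun k j => if (j : ℕ) < k then y else if (j : ℕ) < n - 1 then w else z with htup
  have step : ∀ k, k ≤ n - 2 → F (tup k) = assocB F x (F (tup (k + 1))) := by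
    intro k hk
    have hky : tup (k + 1) ⟨k, by omega⟩ = y := by
      rw [htup]; exact if_pos (by simp)
    have h := keyi hn F hA hS x (tup (k + 1)) ⟨k, by omega⟩
    rw [hky, ← hw] at h
    have hupd : Function.update (tup (k + 1)) ⟨k, by omega⟩ w = tup k := by
      funext j
      rcases j with ⟨jv, hj⟩
      rw [Function.update_apply, htup]
      simp only [Fin.mk.injEq]
      split_ifs <;> first | rfl | omega | (exfalso; omega)
    rw [hupd] at h
    exact h
  have claim : ∀ k, k ≤ n - 2 → F (tup 0) = assocB F x (F (tup (k + 1))) := by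
    intro k
    induction k with
    | zero => intro _; exact step 0 (by omega)
    | succ m ih =>
        intro hk
        rw [ih (by omega), step (m + 1) hk, ell_idem hn F hA hI]
  have h := claim (n - 2) (le_refl _)
  rw [show n - 2 + 1 = n - 1 from by omega] at h
  have e0 : tup 0 = fun j : Fin n => if (j : ℕ) < n - 1 then w else z := by
    funext j
    simp only [htup]
    rw [if_neg (by omega)]
  have h0 : F (tup 0) = assocB F w z := by rw [e0]; rfl
  have e1 : tup (n - 1) = fun j : Fin n => if (j : ℕ) < n - 1 then y else z := by
    funext j
    simp only [htup]
    by_cases hj : (j : ℕ) < n - 1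
    · rw [if_pos hj, if_pos hj]
    · rw [if_neg hj, if_neg hj, if_neg hj]
  have h1 : F (tup (n - 1)) = assocB F y z := by rw [e1]; rfl
  rw [h0, h1] at h
  exact h

end Aux


/-- In a symmetric `n`-ary band, the set `L = {ℓ_x : x ∈ X}` is
closed under composition and `(L,∘)` is a semilattice (composition on `L` is
associative, commutative and idempotent). -/
theorem stmt_5 {X : Type*} {n : ℕ} (hn : 2 ≤ n) (F : (Fin n → X) → X)
    (hA : NAssoc hn F) (hS : NSym F) (hI : NIdem F) :
    (∀ f g : X → X, f ∈ Set.range (ell F) → g ∈ Set.range (ell F) →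
      f ∘ g ∈ Set.range (ell F)) ∧
    (∀ f g h : X → X, f ∈ Set.range (ell F) → g ∈ Set.range (ell F) →
      h ∈ Set.range (ell F) → (f ∘ g) ∘ h = f ∘ (g ∘ h)) ∧
    (∀ f g : X → X, f ∈ Set.range (ell F) → g ∈ Set.range (ell F) → f ∘ g = g ∘ f) ∧
    (∀ f : X → X, f ∈ Set.range (ell F) → f ∘ f = f) := by
  refine ⟨?_, ?_, ?_, ?_⟩
  · rintro f g ⟨x, rfl⟩ ⟨y, rfl⟩
    exact ⟨assocB F x y, funext fun z => ell_absorb hn F hA hS hI x y z⟩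
  · intro f g h _ _ _
    rfl
  · rintro f g ⟨x, rfl⟩ ⟨y, rfl⟩
    funext z
    exact ell_comm hn F hA hS hI x y z
  · rintro f ⟨x, rfl⟩
    funext z
    exact ell_idem hn F hA hI x z
end

section
/- Let (X,F) be a symmetric n-ary band. Then for every x₁,…,xₙ ∈ X one has ℓ_{F(x₁,…,xₙ)} = ℓ_{x₁} ∘ ℓ_{x₂} ∘ ⋯ ∘ ℓ_{xₙ}. -/
open NaryBand

section Stmt6Aux

variable {X : Type*} {n : ℕ}

/-- `F` applied to a list (padded with default `d`). -/
def FL (F : (Fin n → X) → X) (d : X) (l : List X) : X :=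
  F (fun j => l.getD (j : ℕ) d)

/-- fold of `F` over `k` blocks of size `n-1`, ending with `y`. -/
def W (F : (Fin n → X) → X) (d : X) : ℕ → List X → X → X
  | 0, _, y => y
  | k+1, l, y => FL F d (l.take (n-1) ++ [W F d k (l.drop (n-1)) y])

lemma contractEq (F : (Fin n → X) → X) (d : X) (hn : 2 ≤ n) {i : ℕ} (hi : i ≤ n - 1)
    {w : List X} (hw : w.length = 2*n-1) :
    contract F i hn hi (fun j => w.getD (j : ℕ) d) =
      fun j : Fin n => (w.take i ++ FL F d ((w.drop i).take n) :: w.drop (i+n)).getD (j : ℕ) d := by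
  funext j
  have hjn := j.isLt
  have hti : (w.take i).length = i := by
    rw [List.length_take]; omega
  unfold contract
  split_ifs with h1 h2
  · rw [List.getD_append _ _ _ _ (by omega)]
    show w.getD (↑j) d = _
    rw [List.getD_eq_getElem _ _ (by omega), List.getD_eq_getElem _ _ (by omega)]
    simp [List.getElem_take]
  · rw [List.getD_append_right _ _ _ _ (by omega)]
    have : (j : ℕ) - (w.take i).length = 0 := by omega
    rw [this, List.getD_cons_zero]
    unfold FL
    congr 1
    funext k
    have hk := k.isLt
    rw [List.getD_eq_getElem _ _ (by simp [List.length_take, List.length_drop]; omega)]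
    simp only [List.getElem_take, List.getElem_drop]
    rw [List.getD_eq_getElem _ _ (by omega)]
  · rw [List.getD_append_right _ _ _ _ (by omega)]
    have h3 : (j : ℕ) - (w.take i).length = ((j:ℕ) - i - 1) + 1 := by omega
    rw [h3, List.getD_cons_succ]
    show w.getD ((j:ℕ) + n - 1) d = _
    rw [List.getD_eq_getElem _ _ (by omega),
        List.getD_eq_getElem _ _ (by rw [List.length_drop]; omega)]
    simp only [List.getElem_drop]
    congr 1
    omega


lemma coreAssoc (F : (Fin n → X) → X) (d : X) (hn : 2 ≤ n) (hA : NAssoc hn F)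
    {i : ℕ} (hi : i + 1 ≤ n - 1) {w : List X} (hw : w.length = 2*n-1) :
    FL F d (w.take i ++ FL F d ((w.drop i).take n) :: w.drop (i+n)) =
      FL F d (w.take (i+1) ++ FL F d ((w.drop (i+1)).take n) :: w.drop (i+1+n)) := by
  have h1 := hA i hi (fun j => w.getD (j : ℕ) d)
  rw [contractEq F d hn (by omega) hw, contractEq F d hn (by omega) hw] at h1
  exact h1

/-- swap two adjacent entries inside one application of `F`. -/
lemma FL_swap (F : (Fin n → X) → X) (d : X) (hS : NSym F)
    (a b : List X) (p q : X) (hl : (a ++ p :: q :: b).length = n) :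
    FL F d (a ++ p :: q :: b) = FL F d (a ++ q :: p :: b) := by
  have ha : a.length < n := by simp at hl; omega
  have ha2 : a.length + 1 < n := by simp at hl; omega
  have key := hS (Equiv.swap ⟨a.length, ha⟩ ⟨a.length + 1, ha2⟩)
    (fun j => (a ++ q :: p :: b).getD (j : ℕ) d)
  unfold FL
  rw [← key]
  congr 1
  funext j
  simp only [Function.comp_apply]
  rcases eq_or_ne j ⟨a.length, ha⟩ with hj | hj
  · subst hj
    rw [Equiv.swap_apply_left]
    show (a ++ p :: q :: b).getD a.length d = (a ++ q :: p :: b).getD (a.length + 1) d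
    rw [List.getD_append_right _ _ _ _ (by omega), List.getD_append_right _ _ _ _ (by omega)]
    simp
  · rcases eq_or_ne j ⟨a.length + 1, ha2⟩ with hj2 | hj2
    · subst hj2
      rw [Equiv.swap_apply_right]
      show (a ++ p :: q :: b).getD (a.length + 1) d = (a ++ q :: p :: b).getD a.length d
      rw [List.getD_append_right _ _ _ _ (by omega), List.getD_append_right _ _ _ _ (by omega)]
      simp
    · rw [Equiv.swap_apply_of_ne_of_ne hj hj2]
      show (a ++ p :: q :: b).getD (j : ℕ) d = (a ++ q :: p :: b).getD (j : ℕ) d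
      have hja : (j : ℕ) ≠ a.length := fun h => hj (Fin.ext h)
      have hja2 : (j : ℕ) ≠ a.length + 1 := fun h => hj2 (Fin.ext h)
      rcases lt_or_ge (j : ℕ) a.length with h | h
      · rw [List.getD_append _ _ _ _ h, List.getD_append _ _ _ _ h]
      · rw [List.getD_append_right _ _ _ _ h, List.getD_append_right _ _ _ _ h]
        have : (j : ℕ) - a.length = ((j:ℕ) - a.length - 2) + 2 := by omega
        rw [this]
        simp [List.getD_cons_succ]

lemma W_block (F : (Fin n → X) → X) (d : X) (k : ℕ) (b l : List X) (y : X)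
    (hb : b.length = n - 1) :
    W F d (k+1) (b ++ l) y = FL F d (b ++ [W F d k l y]) := by
  show FL F d ((b ++ l).take (n-1) ++ [W F d k ((b ++ l).drop (n-1)) y]) = _
  rw [List.take_left' hb, List.drop_left' hb]


/-- boundary swap. -/
lemma Bdy (F : (Fin n → X) → X) (d : X) (hn : 2 ≤ n) (hA : NAssoc hn F) (hS : NSym F)
    (a c : List X) (p q z : X) (ha : a.length = n-2) (hc : c.length = n-2) :
    FL F d ((a ++ [p]) ++ [FL F d ((q :: c) ++ [z])]) =
      FL F d ((a ++ [q]) ++ [FL F d ((p :: c) ++ [z])]) := by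
  have key : ∀ p q : X, FL F d (a ++ FL F d (p :: q :: c) :: [z]) =
      FL F d ((a ++ [p]) ++ [FL F d ((q :: c) ++ [z])]) := by
    intro p q
    have h := coreAssoc F d hn hA (i := n-2) (by omega)
      (w := a ++ p :: q :: (c ++ [z])) (by simp; omega)
    have e1 : (a ++ p :: q :: (c ++ [z])).take (n-2) = a := List.take_left' ha
    have e2 : (a ++ p :: q :: (c ++ [z])).drop (n-2) = p :: q :: (c ++ [z]) :=
      List.drop_left' ha
    have e3 : (p :: q :: (c ++ [z])).take n = p :: q :: c := by
      have h4 : p :: q :: (c ++ [z]) = (p :: q :: c) ++ [z] := by simp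
      rw [h4, List.take_left' (by simp; omega)]
    have e4 : (a ++ p :: q :: (c ++ [z])).drop (n-2+n) = [z] := by
      have h4 : a ++ p :: q :: (c ++ [z]) = (a ++ p :: q :: c) ++ [z] := by simp
      rw [h4, List.drop_left' (by simp; omega)]
    have e5 : (a ++ p :: q :: (c ++ [z])).take (n-2+1) = a ++ [p] := by
      have h4 : a ++ p :: q :: (c ++ [z]) = (a ++ [p]) ++ (q :: (c ++ [z])) := by simp
      rw [h4, List.take_left' (by simp; omega)]
    have e6 : ((a ++ p :: q :: (c ++ [z])).drop (n-2+1)).take n = (q :: c) ++ [z] := by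
      have h4 : a ++ p :: q :: (c ++ [z]) = (a ++ [p]) ++ (q :: (c ++ [z])) := by simp
      rw [h4, List.drop_left' (by simp; omega), List.take_of_length_le (by simp; omega)]
      simp
    have e7 : (a ++ p :: q :: (c ++ [z])).drop (n-2+1+n) = [] :=
      List.drop_eq_nil_of_le (by simp; omega)
    rw [e1, e2, e3, e4, e5, e6, e7] at h
    exact h
  rw [← key p q, ← key q p]
  have hsw : FL F d (p :: q :: c) = FL F d (q :: p :: c) :=
    FL_swap F d hS [] c p q (by simp; omega)
  rw [hsw]

/-- expand `FL xsl` at the last position of the word. -/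
lemma expandLast (F : (Fin n → X) → X) (d : X) (hn : 2 ≤ n) (hA : NAssoc hn F)
    (xsl : List X) (hx : xsl.length = n) :
    ∀ (k : ℕ) (l : List X) (y : X), l.length = (k+1)*(n-1) - 1 →
      W F d (k+1) (l ++ [FL F d xsl]) y = W F d (k+2) (l ++ xsl) y := by
  intro k
  induction k with
  | zero =>
    intro l y hl
    have hl0 : l.length = n - 2 := by omega
    obtain ⟨x0, xt, rfl⟩ : ∃ x0 xt, xsl = x0 :: xt := by
      cases xsl with
      | nil => simp at hx; omega
      | cons a t => exact ⟨a, t, rfl⟩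
    have hxt : xt.length = n - 1 := by simp at hx; omega
    -- LHS
    have hL : W F d 1 (l ++ [FL F d (x0 :: xt)]) y
        = FL F d ((l ++ [FL F d (x0 :: xt)]) ++ [y]) := by
      show FL F d ((l ++ [FL F d (x0::xt)]).take (n-1) ++ [y]) = _
      rw [List.take_of_length_le (by simp; omega)]
    -- RHS
    have hR : W F d 2 (l ++ (x0 :: xt)) y
        = FL F d ((l ++ [x0]) ++ [FL F d (xt ++ [y])]) := by
      have hre : l ++ (x0 :: xt) = (l ++ [x0]) ++ xt := by simp
      have hW1 : W F d 1 xt y = FL F d (xt ++ [y]) := by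
        show FL F d (xt.take (n-1) ++ [W F d 0 (xt.drop (n-1)) y]) = _
        rw [List.take_of_length_le (by omega)]
        rfl
      rw [hre, W_block F d 1 (l ++ [x0]) xt y (by simp; omega), hW1]
    rw [hL, hR]
    -- core associativity on w := l ++ ((x0::xt) ++ [y])
    have h := coreAssoc F d hn hA (i := n-2) (by omega)
      (w := l ++ ((x0 :: xt) ++ [y])) (by simp; omega)
    have e1 : (l ++ ((x0 :: xt) ++ [y])).take (n-2) = l := List.take_left' hl0
    have e2 : ((l ++ ((x0 :: xt) ++ [y])).drop (n-2)).take n = x0 :: xt := by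
      rw [List.drop_left' hl0, List.take_append,
        List.take_of_length_le (by simp; omega)]
      simp [hx]
    have e4 : (l ++ ((x0 :: xt) ++ [y])).drop (n-2+n) = [y] := by
      have h4 : l ++ ((x0 :: xt) ++ [y]) = (l ++ (x0 :: xt)) ++ [y] := by simp
      rw [h4, List.drop_left' (by simp; omega)]
    have e5 : (l ++ ((x0 :: xt) ++ [y])).take (n-2+1) = l ++ [x0] := by
      have h4 : l ++ ((x0 :: xt) ++ [y]) = (l ++ [x0]) ++ (xt ++ [y]) := by simp
      rw [h4, List.take_left' (by simp; omega)]
    have e6 : ((l ++ ((x0 :: xt) ++ [y])).drop (n-2+1)).take n = xt ++ [y] := by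
      have h4 : l ++ ((x0 :: xt) ++ [y]) = (l ++ [x0]) ++ (xt ++ [y]) := by simp
      rw [h4, List.drop_left' (by simp; omega), List.take_of_length_le (by simp; omega)]
    have e7 : (l ++ ((x0 :: xt) ++ [y])).drop (n-2+1+n) = [] :=
      List.drop_eq_nil_of_le (by simp; omega)
    rw [e1, e2, e4, e5, e6, e7] at h
    have hfin : FL F d (l ++ FL F d (x0 :: xt) :: [y])
        = FL F d ((l ++ [FL F d (x0 :: xt)]) ++ [y]) := by
      congr 1; simp
    rw [← hfin, h]
  | succ k ih =>
    intro l y hl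
    rw [Nat.succ_mul (k+1) (n-1)] at hl
    have h2 : 1 ≤ (k+1)*(n-1) :=
      Nat.one_le_iff_ne_zero.mpr (Nat.mul_ne_zero (by omega) (by omega))
    obtain ⟨b, l', rfl, hb⟩ : ∃ b l', l = b ++ l' ∧ b.length = n-1 :=
      ⟨l.take (n-1), l.drop (n-1), (List.take_append_drop _ _).symm,
        by rw [List.length_take]; omega⟩
    have hl' : l'.length = (k+1)*(n-1) - 1 := by
      have hl2 := hl
      simp only [List.length_append] at hl2
      omega
    rw [List.append_assoc, List.append_assoc,
      W_block F d _ b _ y hb, W_block F d _ b _ y hb, ih l' y hl']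


lemma swapAdj (F : (Fin n → X) → X) (d : X) (hn : 2 ≤ n) (hA : NAssoc hn F) (hS : NSym F) :
    ∀ (k : ℕ) (a b : List X) (p q y : X),
      (a ++ p :: q :: b).length = k * (n-1) →
      W F d k (a ++ p :: q :: b) y = W F d k (a ++ q :: p :: b) y := by
  intro k
  induction k with
  | zero =>
    intro a b p q y hlen
    simp at hlen
  | succ k ih =>
    intro a b p q y hlen
    rw [Nat.succ_mul] at hlen
    simp only [List.length_append, List.length_cons] at hlen
    rcases lt_trichotomy a.length (n-2) with hal | hal | hal
    · -- within-block swap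
      have ht : n - 1 - a.length = (n - 3 - a.length) + 2 := by omega
      set t := n - 3 - a.length with htdef
      have htb : t ≤ b.length := by
        have hk : 0 ≤ k * (n-1) := Nat.zero_le _
        omega
      have htake : ∀ r s : X, (a ++ r :: s :: b).take (n-1)
          = a ++ r :: s :: b.take t := by
        intro r s
        rw [List.take_append, List.take_of_length_le (by omega), ht]
        simp
      have hdrop : ∀ r s : X, (a ++ r :: s :: b).drop (n-1) = b.drop t := by
        intro r s
        rw [List.drop_append, List.drop_eq_nil_of_le (by omega), ht]
        simp
      show FL F d ((a ++ p :: q :: b).take (n-1) ++ [W F d k ((a ++ p :: q :: b).drop (n-1)) y])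
        = FL F d ((a ++ q :: p :: b).take (n-1) ++ [W F d k ((a ++ q :: p :: b).drop (n-1)) y])
      rw [htake, htake, hdrop, hdrop]
      have := FL_swap F d hS a (b.take t ++ [W F d k (b.drop t) y]) p q
        (by simp [List.length_take]; omega)
      simpa using this
    · -- boundary swap
      obtain ⟨k', rfl⟩ : ∃ k', k = k' + 1 := by
        have : 1 ≤ k * (n-1) := by omega
        have : k ≠ 0 := by rintro rfl; omega
        exact ⟨k - 1, by omega⟩
      rw [Nat.succ_mul k' (n-1)] at hlen
      obtain ⟨c, b', rfl, hc⟩ : ∃ c b', b = c ++ b' ∧ c.length = n-2 :=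
        ⟨b.take (n-2), b.drop (n-2), (List.take_append_drop _ _).symm,
          by rw [List.length_take]; omega⟩
      have hblock : ∀ r s : X, W F d (k'+2) (a ++ r :: s :: (c ++ b')) y
          = FL F d ((a ++ [r]) ++ [FL F d ((s :: c) ++ [W F d k' b' y])]) := by
        intro r s
        have hre : a ++ r :: s :: (c ++ b') = (a ++ [r]) ++ ((s :: c) ++ b') := by simp
        rw [hre, W_block F d _ _ _ y (by simp; omega),
          W_block F d _ _ _ y (by simp; omega)]
      rw [hblock, hblock, Bdy F d hn hA hS a c p q _ hal hc]
    · -- first block entirely inside a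
      obtain ⟨bk, a', rfl, hbk⟩ : ∃ bk a', a = bk ++ a' ∧ bk.length = n-1 :=
        ⟨a.take (n-1), a.drop (n-1), (List.take_append_drop _ _).symm,
          by rw [List.length_take]; omega⟩
      simp only [List.length_append] at hlen
      rw [List.append_assoc, List.append_assoc,
        W_block F d _ _ _ y hbk, W_block F d _ _ _ y hbk,
        ih a' b p q y (by simp; omega)]

lemma permInv (F : (Fin n → X) → X) (d : X) (hn : 2 ≤ n) (hA : NAssoc hn F) (hS : NSym F)
    {l l' : List X} (h : l.Perm l') :
    ∀ (c : List X) (k : ℕ) (y : X), (c ++ l).length = k * (n-1) →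
      W F d k (c ++ l) y = W F d k (c ++ l') y := by
  induction h with
  | nil => intro c k y _; rfl
  | @cons x l₁ l₂ h ih =>
    intro c k y hl
    have e1 : c ++ x :: l₁ = (c ++ [x]) ++ l₁ := by simp
    have e2 : c ++ x :: l₂ = (c ++ [x]) ++ l₂ := by simp
    rw [e1, e2, ih (c ++ [x]) k y (by simp at hl ⊢; omega)]
  | swap x₁ x₂ l =>
    intro c k y hl
    exact swapAdj F d hn hA hS k c l x₂ x₁ y hl
  | trans h₁ h₂ ih₁ ih₂ =>
    intro c k y hl
    have hlen := h₁.length_eq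
    rw [ih₁ c k y hl, ih₂ c k y (by simp at hl ⊢; omega)]


lemma flatten_rep_singleton (m : ℕ) (l : List X) :
    (List.replicate m l).flatten ++ l = (List.replicate (m+1) l).flatten := by
  induction m with
  | zero => simp
  | succ m ih =>
    rw [List.replicate_succ, List.flatten_cons, List.append_assoc, ih,
      ← List.flatten_cons, ← List.replicate_succ]

lemma rep_flatten_perm (m : ℕ) : ∀ l : List X,
    (List.replicate m l).flatten.Perm (l.map (List.replicate m)).flatten := by
  intro l
  induction l with
  | nil => simp
  | cons x t ih =>
    have h1 : (List.replicate m (x :: t)).flatten.Perm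
        (List.replicate m x ++ (List.replicate m t).flatten) := by
      clear ih
      induction m with
      | zero => simp
      | succ m ih =>
        have e1 : (List.replicate (m+1) (x :: t)).flatten
            = (x :: t) ++ (List.replicate m (x :: t)).flatten := by
          rw [List.replicate_succ, List.flatten_cons]
        have e2 : List.replicate (m+1) x ++ (List.replicate (m+1) t).flatten
            = (x :: List.replicate m x) ++ (t ++ (List.replicate m t).flatten) := by
          rw [List.replicate_succ, List.replicate_succ, List.flatten_cons]
        rw [e1, e2]
        have p1 : ((x :: t) ++ (List.replicate m (x :: t)).flatten).Perm
            ((x :: t) ++ (List.replicate m x ++ (List.replicate m t).flatten)) :=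
          List.Perm.append_left _ ih
        refine p1.trans ?_
        have e3 : (x :: t) ++ (List.replicate m x ++ (List.replicate m t).flatten)
            = x :: (t ++ (List.replicate m x ++ (List.replicate m t).flatten)) := by simp
        have e4 : (x :: List.replicate m x) ++ (t ++ (List.replicate m t).flatten)
            = x :: (List.replicate m x ++ (t ++ (List.replicate m t).flatten)) := by simp
        rw [e3, e4]
        refine List.Perm.cons x ?_
        rw [← List.append_assoc, ← List.append_assoc]
        exact List.perm_append_comm.append_right _
    refine h1.trans ?_
    have h2 : (List.replicate m x ++ (List.replicate m t).flatten).Perm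
        (List.replicate m x ++ (t.map (List.replicate m)).flatten) :=
      List.Perm.append_left _ ih
    refine h2.trans ?_
    simp

lemma assocB_FL (F : (Fin n → X) → X) (d : X) (hn : 2 ≤ n) (x z : X) :
    assocB F x z = FL F d (List.replicate (n-1) x ++ [z]) := by
  unfold assocB FL
  congr 1
  funext j
  have hj := j.isLt
  rcases lt_or_ge (j : ℕ) (n-1) with h | h
  · rw [if_pos h, List.getD_append _ _ _ _ (by simpa using h),
      List.getD_eq_getElem _ _ (by simpa using h), List.getElem_replicate]
  · rw [if_neg (by omega), List.getD_append_right _ _ _ _ (by simpa using h)]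
    have : (j:ℕ) - (List.replicate (n-1) x).length = 0 := by simp; omega
    rw [this, List.getD_cons_zero]

lemma foldr_ell_W (F : (Fin n → X) → X) (d : X) (hn : 2 ≤ n) :
    ∀ (l : List X) (y : X),
      (l.map (ell F)).foldr (· ∘ ·) id y
        = W F d l.length ((l.map (List.replicate (n-1))).flatten) y := by
  intro l
  induction l with
  | nil => intro y; rfl
  | cons x t ih =>
    intro y
    show ell F x ((t.map (ell F)).foldr (· ∘ ·) id y) = _
    rw [ih y]
    show assocB F x _ = _
    rw [assocB_FL F d hn]
    have : ((x :: t).map (List.replicate (n-1))).flatten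
        = List.replicate (n-1) x ++ (t.map (List.replicate (n-1))).flatten := by simp
    rw [this, List.length_cons,
      W_block F d _ _ _ y (by simp)]


lemma expandAll (F : (Fin n → X) → X) (d : X) (hn : 2 ≤ n) (hA : NAssoc hn F) (hS : NSym F)
    (xsl : List X) (hx : xsl.length = n) :
    ∀ (j i : ℕ) (y : X), i + j = n - 1 →
      W F d (i+1) (List.replicate j (FL F d xsl) ++ (List.replicate i xsl).flatten) y
        = W F d ((n-1)+1) ((List.replicate (n-1) xsl).flatten) y := by
  intro j
  induction j with
  | zero =>
    intro i y hij
    have hi : i = n - 1 := by omega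
    subst hi
    simp
  | succ j ih =>
    intro i y hij
    have hnn : n = (n-1)+1 := by omega
    have hin : i * n = i * (n-1) + i := by conv_lhs => rw [hnn, Nat.mul_succ]
    have hflat : (List.replicate i xsl).flatten.length = i * n := by simp [hx]
    set c := FL F d xsl with hc
    set Ji := (List.replicate i xsl).flatten with hJi
    -- step 1: move one c to the end
    have hperm : (List.replicate (j+1) c ++ Ji).Perm
        ((List.replicate j c ++ Ji) ++ [c]) := by
      rw [List.replicate_succ, List.cons_append]
      exact (List.perm_append_singleton c _).symm
    have hlen : ([] ++ (List.replicate (j+1) c ++ Ji)).length = (i+1) * (n-1) := by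
      rw [Nat.succ_mul i (n-1)]
      simp [hflat]
      omega
    have h1 := permInv F d hn hA hS hperm [] (i+1) y hlen
    simp only [List.nil_append] at h1
    rw [h1]
    -- step 2: expand the last c
    have hlen2 : (List.replicate j c ++ Ji).length = (i+1)*(n-1) - 1 := by
      rw [Nat.succ_mul i (n-1)]
      simp [hflat]
      omega
    have h2 := expandLast F d hn hA xsl hx i (List.replicate j c ++ Ji) y hlen2
    rw [h2]
    -- step 3: reassociate and use ih
    have h3 : (List.replicate j c ++ Ji) ++ xsl
        = List.replicate j c ++ (List.replicate (i+1) xsl).flatten := by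
      rw [List.append_assoc, hJi, flatten_rep_singleton]
    have hidx : i + 2 = (i+1) + 1 := rfl
    rw [h3, hidx, ih (i+1) y (by omega)]

end Stmt6Aux


/-- In a symmetric `n`-ary band,
`ℓ_{F(x₁,…,xₙ)} = ℓ_{x₁} ∘ ⋯ ∘ ℓ_{xₙ}`. -/
theorem stmt_6 {X : Type*} {n : ℕ} (hn : 2 ≤ n) (F : (Fin n → X) → X)
    (hA : NAssoc hn F) (hS : NSym F) (hI : NIdem F) :
    ∀ xs : Fin n → X,
      ell F (F xs) =
        (List.ofFn (fun i => ell F (xs i))).foldr (· ∘ ·) id := by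
  intro xs
  funext y
  set d := xs ⟨0, by omega⟩ with hd
  set xsl := List.ofFn xs with hxsl
  have hx : xsl.length = n := by simp [hxsl]
  have hc : FL F d xsl = F xs := by
    unfold FL
    congr 1
    funext j
    rw [List.getD_eq_getElem _ _ (by rw [hx]; exact j.isLt)]
    simp [hxsl]
  -- LHS
  have hL1 : ell F (F xs) y = W F d 1 (List.replicate (n-1) (F xs)) y := by
    show assocB F (F xs) y = _
    rw [assocB_FL F d hn]
    show _ = FL F d ((List.replicate (n-1) (F xs)).take (n-1)
      ++ [W F d 0 ((List.replicate (n-1) (F xs)).drop (n-1)) y])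
    rw [List.take_of_length_le (by simp)]
    rfl
  have hL2 := expandAll F d hn hA hS xsl hx (n-1) 0 y (by omega)
  simp only [List.replicate_zero, List.flatten_nil, List.append_nil, hc] at hL2
  -- RHS
  have hR0 : List.ofFn (fun i => ell F (xs i)) = xsl.map (ell F) := by
    rw [hxsl, List.map_ofFn]
    rfl
  rw [hR0]
  have hR1 := foldr_ell_W F d hn xsl y
  rw [hR1, hx]
  -- connect
  have hperm := rep_flatten_perm (n-1) xsl
  have hlen : ([] ++ (List.replicate (n-1) xsl).flatten).length = n * (n-1) := by
    simp [hx]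
    exact Nat.mul_comm (n-1) n
  have h4 := permInv F d hn hA hS hperm [] n y hlen
  simp only [List.nil_append] at h4
  have hn1 : (n-1)+1 = n := by omega
  rw [hL1, hL2, hn1, h4]
end

section
/- Let (X,F) be a symmetric n-ary band. Then σ is a congruence for F: if x₁,…,xₙ, y₁,…,yₙ ∈ X satisfy x_i σ y_i for every i ∈ {1,…,n}, then F(x₁,…,xₙ) σ F(y₁,…,yₙ). -/
open NaryBand

section Proof
variable {X : Type*} {n : ℕ}

lemma contract_zero_eq (hn : 2 ≤ n) (F : (Fin n → X) → X) (hA : NAssoc hn F) :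
    ∀ (i : ℕ) (hi : i ≤ n - 1) (u : Fin (2*n-1) → X),
      F (contract F 0 hn (by omega) u) = F (contract F i hn hi u) := by
  intro i
  induction i with
  | zero => intro hi u; rfl
  | succ i ih =>
    intro hi u
    rw [ih (by omega) u]
    exact hA i (by omega) u

lemma contract_eq (hn : 2 ≤ n) (F : (Fin n → X) → X) (hA : NAssoc hn F)
    (i i' : ℕ) (hi : i ≤ n - 1) (hi' : i' ≤ n - 1) (u : Fin (2*n-1) → X) :
    F (contract F i hn hi u) = F (contract F i' hn hi' u) :=
  (contract_zero_eq hn F hA i hi u).symm.trans (contract_zero_eq hn F hA i' hi' u)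


lemma contract_lt {hn : 2 ≤ n} (F : (Fin n → X) → X) {i : ℕ} {hi : i ≤ n - 1}
    (x : Fin (2*n-1) → X) {j : Fin n} (h : (j : ℕ) < i) :
    contract F i hn hi x j = x ⟨(j : ℕ), by have := j.isLt; omega⟩ := by
  simp [contract, h]

lemma contract_at {hn : 2 ≤ n} (F : (Fin n → X) → X) {i : ℕ} {hi : i ≤ n - 1}
    (x : Fin (2*n-1) → X) {j : Fin n} (h : (j : ℕ) = i) :
    contract F i hn hi x j = F (fun k => x ⟨i + (k : ℕ), by have := k.isLt; omega⟩) := by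
  simp [contract, h]

lemma contract_gt {hn : 2 ≤ n} (F : (Fin n → X) → X) {i : ℕ} {hi : i ≤ n - 1}
    (x : Fin (2*n-1) → X) {j : Fin n} (h : i < (j : ℕ)) :
    contract F i hn hi x j = x ⟨(j : ℕ) + n - 1, by have := j.isLt; omega⟩ := by
  have h1 : ¬ ((j : ℕ) < i) := by omega
  have h2 : ¬ ((j : ℕ) = i) := by omega
  simp [contract, h1, h2]

lemma ell_apply (hn : 2 ≤ n) (F : (Fin n → X) → X) (hA : NAssoc hn F) (hS : NSym F)
    (a : X) (z : Fin n → X) (p : Fin n) :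
    assocB F a (F z) = F (Function.update z p (assocB F a (z p))) := by
  have hσp : ∀ j : Fin n, True := fun _ => trivial
  set σp := Equiv.swap (⟨0, by omega⟩ : Fin n) p with hσ
  have σp0 : σp ⟨0, by omega⟩ = p := Equiv.swap_apply_left _ _
  set z' : Fin n → X := fun j => z (σp j) with hz'
  set u : Fin (2*n-1) → X :=
    fun q => if _h : (q : ℕ) < n - 1 then a else z' ⟨(q : ℕ) - (n-1), by have := q.isLt; omega⟩
    with hu
  have hu_lt : ∀ (q : Fin (2*n-1)), (q:ℕ) < n - 1 → u q = a := by
    intro q h; rw [hu]; exact dif_pos h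
  have hu_ge : ∀ (q : Fin (2*n-1)) (hq : ¬ ((q:ℕ) < n - 1)),
      u q = z' ⟨(q : ℕ) - (n-1), by have := q.isLt; omega⟩ := by
    intro q h; rw [hu]; exact dif_neg h
  have h1 : assocB F a (F z) = F (contract F (n-1) hn (le_refl _) u) := by
    have hz'z : F z' = F z := hS σp z
    rw [← hz'z]
    unfold assocB
    congr 1
    funext j
    by_cases hj : (j : ℕ) < n - 1
    · rw [if_pos hj, contract_lt F u hj, hu_lt _ hj]
    · have hj' : (j : ℕ) = n - 1 := by have := j.isLt; omega
      rw [if_neg hj, contract_at F u hj']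
      congr 1
      funext k
      rw [hu_ge _ (by simp only [Fin.val_mk]; omega)]
      exact congrArg z' (Fin.ext (by simp only [Fin.val_mk]; omega))
  have h2 : F (contract F 0 hn (by omega) u) =
      F (Function.update z p (assocB F a (z p))) := by
    have key : contract F 0 hn (by omega) u =
        (Function.update z p (assocB F a (z p))) ∘ σp := by
      funext j
      simp only [Function.comp_apply]
      by_cases hj : (j : ℕ) = 0
      · rw [contract_at F u hj]
        have hj0 : j = ⟨0, by omega⟩ := Fin.ext hj
        have hσj : σp j = p := by rw [hj0]; exact σp0
        rw [hσj, Function.update_self]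
        unfold assocB
        congr 1
        funext k
        by_cases hk : (k : ℕ) < n - 1
        · rw [if_pos hk, hu_lt _ (by simpa using hk)]
        · rw [if_neg hk, hu_ge _ (by simp; omega)]
          have : (⟨0 + (k:ℕ) - (n-1), by have := k.isLt; omega⟩ : Fin n) = ⟨0, by omega⟩ :=
            Fin.ext (by have := k.isLt; simp; omega)
          rw [this, hz']
          exact congrArg z σp0
      · rw [contract_gt F u (by omega)]
        have hne : σp j ≠ p := by
          intro hc
          have h3 := congrArg σp hc
          rw [hσ, Equiv.swap_apply_self, Equiv.swap_apply_right] at h3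
          exact hj (congrArg Fin.val h3)
        rw [Function.update_of_ne hne]
        rw [hu_ge _ (by simp only [Fin.val_mk]; have := j.isLt; omega)]
        rw [hz']
        exact congrArg z' (Fin.ext (by have := j.isLt; simp; omega))
    rw [key]
    exact hS σp _
  rw [h1, ← contract_eq hn F hA 0 (n-1) (by omega) (le_refl _) u, h2]


def swapNat (a b i : ℕ) : ℕ := if i = a then b else if i = b then a else i

def tower (F : (Fin n → X) → X) : ℕ → (ℕ → X) → X → X
  | 0, _, c => c
  | (k+1), g, c =>
      F (fun j => if (j : ℕ) < n - 1 then g (j : ℕ)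
        else tower F k (fun t => g (t + (n-1))) c)

lemma tower_succ (F : (Fin n → X) → X) (k : ℕ) (g : ℕ → X) (c : X) :
    tower F (k+1) g c = F (fun j => if (j : ℕ) < n - 1 then g (j : ℕ)
      else tower F k (fun t => g (t + (n-1))) c) := rfl

lemma tower_congr (F : (Fin n → X) → X) :
    ∀ (k : ℕ) (g g' : ℕ → X) (c : X), (∀ i, i < k*(n-1) → g i = g' i) →
      tower F k g c = tower F k g' c := by
  intro k
  induction k with
  | zero => intro g g' c _; rfl
  | succ k ih =>
    intro g g' c h
    have hs : (k+1)*(n-1) = k*(n-1) + (n-1) := by ring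
    rw [tower_succ, tower_succ]
    congr 1
    funext j
    by_cases hj : (j:ℕ) < n-1
    · rw [if_pos hj, if_pos hj, h _ (by omega)]
    · rw [if_neg hj, if_neg hj]
      exact ih _ _ c (fun i hi => h _ (by omega))

lemma tower_two (hn : 2 ≤ n) (F : (Fin n → X) → X) (hA : NAssoc hn F)
    (k : ℕ) (g : ℕ → X) (c : X) :
    tower F (k+2) g c = F (contract F 0 hn (by omega)
      (fun q => if (q:ℕ) < 2*n-2 then g (q:ℕ)
        else tower F k (fun t => g (t + (n-1) + (n-1))) c)) := by
  set T2 := tower F k (fun t => g (t + (n-1) + (n-1))) c with hT2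
  set u : Fin (2*n-1) → X := fun q => if (q:ℕ) < 2*n-2 then g (q:ℕ) else T2 with hu
  have hu_lt : ∀ (q : Fin (2*n-1)), (q:ℕ) < 2*n-2 → u q = g (q:ℕ) := by
    intro q h; rw [hu]; exact if_pos h
  have hu_ge : ∀ (q : Fin (2*n-1)), ¬((q:ℕ) < 2*n-2) → u q = T2 := by
    intro q h; rw [hu]; exact if_neg h
  rw [← contract_eq hn F hA (n-1) 0 (le_refl _) (by omega) u]
  rw [tower_succ, tower_succ]
  congr 1
  funext j
  by_cases hj : (j:ℕ) < n-1
  · rw [if_pos hj, contract_lt F u hj, hu_lt _ (by simp only [Fin.val_mk]; omega)]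
  · have hj' : (j:ℕ) = n-1 := by have := j.isLt; omega
    rw [if_neg hj, contract_at F u hj']
    congr 1
    funext k'
    by_cases hk : (k':ℕ) < n-1
    · rw [if_pos hk, hu_lt _ (by simp only [Fin.val_mk]; omega)]
      exact congrArg g (by simp only [Fin.val_mk]; omega)
    · rw [if_neg hk, hu_ge _ (by simp only [Fin.val_mk]; have := k'.isLt; omega)]

lemma tower_adj (hn : 2 ≤ n) (F : (Fin n → X) → X) (hA : NAssoc hn F) (hS : NSym F) :
    ∀ (k : ℕ) (g : ℕ → X) (c : X) (t : ℕ), t + 1 < k * (n-1) →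
      tower F k g c = tower F k (fun i => g (swapNat t (t+1) i)) c := by
  intro k
  induction k with
  | zero =>
    intro g c t ht
    have : (0:ℕ)*(n-1) = 0 := by ring
    omega
  | succ k ih =>
    intro g c t ht
    have hs : (k+1)*(n-1) = k*(n-1) + (n-1) := by ring
    rcases lt_trichotomy (t+1) (n-1) with hcase | hcase | hcase
    · -- within the first layer
      rw [tower_succ, tower_succ]
      have hperm := hS (Equiv.swap (⟨t, by omega⟩ : Fin n) (⟨t+1, by omega⟩ : Fin n))
        (fun j => if (j : ℕ) < n - 1 then g (j : ℕ)
          else tower F k (fun t' => g (t' + (n-1))) c)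
      rw [← hperm]
      congr 1
      funext j
      simp only [Function.comp_apply, Equiv.swap_apply_def, Fin.ext_iff, apply_ite Fin.val, Fin.val_mk, swapNat]
      split_ifs <;>
        first
          | rfl
          | exact congrArg g (by omega)
          | (exfalso; omega)
          | (congr 1; funext t'; split_ifs <;>
              first
                | rfl
                | exact congrArg g (by omega)
                | (exfalso; omega))
    · -- boundary between layer 1 and layer 2
      have hk1 : 1 ≤ k := by
        by_contra hk
        have hk0 : k = 0 := by omega
        subst hk0
        have : (1:ℕ)*(n-1) = n-1 := by ring
        omega
      obtain ⟨k', rfl⟩ : ∃ k', k = k' + 1 := ⟨k - 1, by omega⟩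
      have hts : t = n - 2 := by omega
      subst hts
      have hkk : k' + 1 + 1 = k' + 2 := rfl
      rw [hkk]
      rw [tower_two hn F hA k' g c, tower_two hn F hA k' _ c]
      set g' : ℕ → X := fun i => g (swapNat (n-2) (n-2+1) i) with hg'
      set T2 := tower F k' (fun t => g (t + (n-1) + (n-1))) c with hT2
      have hT2' : tower F k' (fun t => g' (t + (n-1) + (n-1))) c = T2 := by
        rw [hT2]
        apply tower_congr
        intro i _
        rw [hg']
        simp only [swapNat]
        rw [if_neg (by omega), if_neg (by omega)]
      set u : Fin (2*n-1) → X := fun q => if (q:ℕ) < 2*n-2 then g (q:ℕ) else T2 with hu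
      set u' : Fin (2*n-1) → X := fun q => if (q:ℕ) < 2*n-2 then g' (q:ℕ)
        else tower F k' (fun t => g' (t + (n-1) + (n-1))) c with hu'
      have hu_lt : ∀ (q : Fin (2*n-1)), (q:ℕ) < 2*n-2 → u q = g (q:ℕ) := by
        intro q h; rw [hu]; exact if_pos h
      have hu_ge : ∀ (q : Fin (2*n-1)), ¬((q:ℕ) < 2*n-2) → u q = T2 := by
        intro q h; rw [hu]; exact if_neg h
      have hu'_lt : ∀ (q : Fin (2*n-1)), (q:ℕ) < 2*n-2 → u' q = g' (q:ℕ) := by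
        intro q h; rw [hu']; exact if_pos h
      have hu'_ge : ∀ (q : Fin (2*n-1)), ¬((q:ℕ) < 2*n-2) → u' q = T2 := by
        intro q h; rw [hu']; exact (if_neg h).trans hT2'
      congr 1
      funext j
      by_cases hj0 : (j:ℕ) = 0
      · rw [contract_at F u hj0, contract_at F u' hj0]
        have w1 : (fun k : Fin n => u ⟨0 + (k:ℕ), by have := k.isLt; omega⟩)
            = (fun k : Fin n => g (k:ℕ)) := by
          funext k
          rw [hu_lt _ (by simp only [Fin.val_mk]; have := k.isLt; omega)]
          exact congrArg g (by simp only [Fin.val_mk]; omega)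
        have w2 : (fun k : Fin n => u' ⟨0 + (k:ℕ), by have := k.isLt; omega⟩)
            = (fun k : Fin n => g' (k:ℕ)) := by
          funext k
          rw [hu'_lt _ (by simp only [Fin.val_mk]; have := k.isLt; omega)]
          exact congrArg g' (by simp only [Fin.val_mk]; omega)
        rw [w1, w2]
        have hswap := hS (Equiv.swap (⟨n-2, by omega⟩ : Fin n) (⟨n-1, by omega⟩ : Fin n))
          (fun k : Fin n => g (k:ℕ))
        rw [← hswap]
        congr 1
        funext k
        simp only [Function.comp_apply, Equiv.swap_apply_def, Fin.ext_iff, apply_ite Fin.val,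
          Fin.val_mk, hg', swapNat]
        split_ifs <;>
          first
            | rfl
            | exact congrArg g (by omega)
            | (exfalso; omega)
      · rw [contract_gt F u (by omega), contract_gt F u' (by omega)]
        by_cases hjb : ((j:ℕ) + n - 1) < 2*n-2
        · rw [hu_lt _ (by simp only [Fin.val_mk]; omega),
            hu'_lt _ (by simp only [Fin.val_mk]; omega)]
          simp only [hg', swapNat, Fin.val_mk]
          rw [if_neg (by omega), if_neg (by omega)]
        · rw [hu_ge _ (by simp only [Fin.val_mk]; omega),
            hu'_ge _ (by simp only [Fin.val_mk]; omega)]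
    · -- inside deeper layers
      rw [tower_succ, tower_succ]
      congr 1
      funext j
      by_cases hj : (j:ℕ) < n-1
      · rw [if_pos hj, if_pos hj]
        simp only [swapNat]
        rw [if_neg (by omega), if_neg (by omega)]
      · rw [if_neg hj, if_neg hj]
        have hb : (t - (n-1)) + 1 < k * (n-1) := by omega
        rw [ih (fun t' => g (t' + (n-1))) c (t - (n-1)) hb]
        congr 1
        funext i
        simp only [swapNat]
        split_ifs <;> exact congrArg g (by omega)


lemma swapNat_symm (a b : ℕ) : ∀ i, swapNat a b i = swapNat b a i := by
  intro i; simp only [swapNat]; split_ifs <;> omega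

lemma tower_swap_aux (hn : 2 ≤ n) (F : (Fin n → X) → X) (hA : NAssoc hn F) (hS : NSym F) :
    ∀ (d k : ℕ) (g : ℕ → X) (c : X) (s t : ℕ), t = s + d → t < k * (n-1) →
      tower F k g c = tower F k (fun i => g (swapNat s t i)) c := by
  intro d
  induction d with
  | zero =>
    intro k g c s t hst _
    apply tower_congr
    intro i _
    simp only [swapNat]
    split_ifs <;> exact congrArg g (by omega)
  | succ d ih =>
    intro k g c s t hst htb
    by_cases hd : d = 0
    · subst hd
      have h1 : t = s + 1 := by omega
      subst h1
      exact tower_adj hn F hA hS k g c s (by omega)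
    · have step1 := tower_adj hn F hA hS k g c s (by omega)
      have step2 := ih k (fun i => g (swapNat s (s+1) i)) c (s+1) t (by omega) htb
      have step3 := tower_adj hn F hA hS k
        (fun i => (fun i' => g (swapNat s (s+1) i')) (swapNat (s+1) t i)) c s (by omega)
      rw [step1, step2, step3]
      apply tower_congr
      intro i _
      simp only [swapNat]
      split_ifs <;> exact congrArg g (by omega)

lemma tower_swap (hn : 2 ≤ n) (F : (Fin n → X) → X) (hA : NAssoc hn F) (hS : NSym F)
    (k : ℕ) (g : ℕ → X) (c : X) (s t : ℕ) (hs : s < k * (n-1)) (ht : t < k * (n-1)) :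
    tower F k g c = tower F k (fun i => g (swapNat s t i)) c := by
  rcases le_or_gt s t with h | h
  · exact tower_swap_aux hn F hA hS (t - s) k g c s t (by omega) ht
  · rw [tower_swap_aux hn F hA hS (s - t) k g c t s (by omega) hs]
    apply tower_congr
    intro i _
    exact congrArg g (swapNat_symm t s i)

lemma tower_perm (hn : 2 ≤ n) (F : (Fin n → X) → X) (hA : NAssoc hn F) (hS : NSym F)
    (k : ℕ) (c : X) (π : Equiv.Perm (Fin (k * (n-1)))) (g : ℕ → X) :
    tower F k g c =
      tower F k (fun i => if h : i < k * (n-1) then g ((π ⟨i, h⟩ : Fin (k*(n-1))) : ℕ)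
        else g i) c := by
  revert g
  refine Equiv.Perm.swap_induction_on π ?_ ?_
  · intro g
    apply tower_congr
    intro i _
    by_cases h : i < k * (n-1)
    · rw [dif_pos h]; rfl
    · rw [dif_neg h]
  · intro π a b hab ih g
    have e1 : tower F k g c = tower F k
        (fun i => if h : i < k * (n-1) then g ((Equiv.swap a b ⟨i, h⟩ : Fin (k*(n-1))) : ℕ)
          else g i) c := by
      rw [tower_swap hn F hA hS k g c (a:ℕ) (b:ℕ) a.isLt b.isLt]
      apply tower_congr
      intro i hi
      rw [dif_pos hi]
      apply congrArg g
      simp only [swapNat, Equiv.swap_apply_def, Fin.ext_iff]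
      split_ifs <;> simp_all [Fin.ext_iff] <;> omega
    rw [e1, ih]
    apply tower_congr
    intro i hi
    rw [dif_pos hi, dif_pos hi]
    by_cases h : (((π ⟨i, hi⟩ : Fin (k*(n-1)))) : ℕ) < k * (n-1)
    · rw [dif_pos h]
      apply congrArg g
      apply congrArg Fin.val
      apply congrArg (Equiv.swap a b)
      exact Fin.eta _ _
    · exact absurd (π ⟨i, hi⟩).isLt h


lemma ell_fix (hn : 2 ≤ n) (F : (Fin n → X) → X) (hA : NAssoc hn F) (hS : NSym F)
    (a : X) (z : Fin n → X) (p : Fin n) (h : assocB F a (z p) = z p) :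
    assocB F a (F z) = F z := by
  rw [ell_apply hn F hA hS a z p, h, Function.update_eq_self]

lemma Aexp (hn : 2 ≤ n) (F : (Fin n → X) → X) (hA : NAssoc hn F) (hS : NSym F)
    (xs : Fin n → X) : ∀ m, m ≤ n-1 → ∀ d : X,
    F (fun j => if (j:ℕ) < m then F xs else if (j:ℕ) < n-1 then xs ⟨n-1, by omega⟩ else d)
    = tower F m
        (fun i => xs ⟨i % (n-1), by have := Nat.mod_lt i (show 0 < n-1 by omega); omega⟩)
        (assocB F (xs ⟨n-1, by omega⟩) d) := by
  intro m
  induction m with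
  | zero =>
    intro _ d
    show F _ = assocB F (xs ⟨n-1, by omega⟩) d
    unfold assocB
    congr 1
  | succ m ih =>
    intro hm d
    have step : F (fun j => if (j:ℕ) < m+1 then F xs
          else if (j:ℕ) < n-1 then xs ⟨n-1, by omega⟩ else d)
        = F (fun j : Fin n => if (j:ℕ) < n-1 then xs ⟨(j:ℕ), j.isLt⟩
            else F (fun j' => if (j':ℕ) < m then F xs
              else if (j':ℕ) < n-1 then xs ⟨n-1, by omega⟩ else d)) := by
      set u : Fin (2*n-1) → X := fun q =>
        if h : (q:ℕ) < n then xs ⟨(q:ℕ), h⟩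
        else if (q:ℕ) < n + m then F xs
        else if (q:ℕ) < 2*n-2 then xs ⟨n-1, by omega⟩ else d with hu
      have hu1 : ∀ (q : Fin (2*n-1)) (h : (q:ℕ) < n), u q = xs ⟨(q:ℕ), h⟩ := by
        intro q h; rw [hu]; exact dif_pos h
      have hu2 : ∀ (q : Fin (2*n-1)), n ≤ (q:ℕ) → (q:ℕ) < n + m → u q = F xs := by
        intro q h1 h2; simp only [hu]; rw [dif_neg (by omega)]; exact if_pos h2
      have hu3 : ∀ (q : Fin (2*n-1)), n + m ≤ (q:ℕ) → (q:ℕ) < 2*n-2 →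
          u q = xs ⟨n-1, by omega⟩ := by
        intro q h1 h2; simp only [hu]; rw [dif_neg (by omega), if_neg (by omega)]
        exact if_pos h2
      have hu4 : ∀ (q : Fin (2*n-1)), 2*n-2 ≤ (q:ℕ) → u q = d := by
        intro q h1; simp only [hu]; rw [dif_neg (by omega), if_neg (by omega), if_neg (by omega)]
      have e0 : F (fun j => if (j:ℕ) < m+1 then F xs
          else if (j:ℕ) < n-1 then xs ⟨n-1, by omega⟩ else d)
          = F (contract F 0 hn (by omega) u) := by
        congr 1
        funext j
        by_cases hj : (j:ℕ) = 0
        · rw [contract_at F u hj, if_pos (by omega)]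
          congr 1
          funext k
          rw [hu1 _ (by simp only [Fin.val_mk]; omega)]
          exact congrArg xs (Fin.ext (by simp only [Fin.val_mk]; omega))
        · rw [contract_gt F u (by omega)]
          by_cases h1 : (j:ℕ) < m+1
          · rw [if_pos h1, hu2 _ (by simp only [Fin.val_mk]; omega)
              (by simp only [Fin.val_mk]; omega)]
          · rw [if_neg h1]
            by_cases h2 : (j:ℕ) < n-1
            · rw [if_pos h2, hu3 _ (by simp only [Fin.val_mk]; omega)
                (by simp only [Fin.val_mk]; omega)]
            · rw [if_neg h2, hu4 _ (by simp only [Fin.val_mk]; have := j.isLt; omega)]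
      have e1 : F (contract F (n-1) hn (le_refl _) u)
          = F (fun j : Fin n => if (j:ℕ) < n-1 then xs ⟨(j:ℕ), j.isLt⟩
            else F (fun j' => if (j':ℕ) < m then F xs
              else if (j':ℕ) < n-1 then xs ⟨n-1, by omega⟩ else d)) := by
        congr 1
        funext j
        by_cases hj : (j:ℕ) < n-1
        · rw [contract_lt F u hj, if_pos hj, hu1 _ (by simp only [Fin.val_mk]; omega)]
        · have hj' : (j:ℕ) = n-1 := by have := j.isLt; omega
          rw [contract_at F u hj', if_neg hj]
          set σ := Equiv.swap (⟨0, by omega⟩ : Fin n) (⟨m, by omega⟩ : Fin n) with hσdef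
          have hswap := hS σ
            (fun j' : Fin n => if (j':ℕ) < m then F xs
              else if (j':ℕ) < n-1 then xs ⟨n-1, by omega⟩ else d)
          rw [← hswap]
          congr 1
          funext k
          simp only [Function.comp_apply]
          by_cases h1 : (k:ℕ) = 0
          · have hv : ((σ k : Fin n) : ℕ) = m := by
              rw [hσdef, show k = (⟨0, by omega⟩ : Fin n) from Fin.ext h1,
                Equiv.swap_apply_left]
            rw [hv, hu1 _ (by simp only [Fin.val_mk]; omega)]
            rw [if_neg (by omega), if_pos (by omega)]
            exact congrArg xs (Fin.ext (by simp only [Fin.val_mk]; omega))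
          · by_cases h2 : (k:ℕ) = m
            · have hv : ((σ k : Fin n) : ℕ) = 0 := by
                rw [hσdef, show k = (⟨m, by omega⟩ : Fin n) from Fin.ext h2,
                  Equiv.swap_apply_right]
              rw [hv, hu2 _ (by simp only [Fin.val_mk]; omega)
                (by simp only [Fin.val_mk]; omega), if_pos (by omega)]
            · have hv : σ k = k := by
                rw [hσdef]
                refine Equiv.swap_apply_of_ne_of_ne ?_ ?_
                · intro hc; exact h1 (by rw [hc])
                · intro hc; exact h2 (by rw [hc])
              rw [hv]
              by_cases h3 : (k:ℕ) < m
              · rw [hu2 _ (by simp only [Fin.val_mk]; omega)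
                  (by simp only [Fin.val_mk]; omega), if_pos h3]
              · by_cases h4 : (k:ℕ) < n-1
                · rw [hu3 _ (by simp only [Fin.val_mk]; omega)
                    (by simp only [Fin.val_mk]; omega), if_neg h3, if_pos h4]
                · rw [hu4 _ (by simp only [Fin.val_mk]; have := k.isLt; omega),
                    if_neg h3, if_neg h4]
      rw [e0, contract_eq hn F hA 0 (n-1) (by omega) (le_refl _) u, e1]
    rw [step, tower_succ]
    congr 1
    funext j
    by_cases hj : (j:ℕ) < n-1
    · rw [if_pos hj, if_pos hj]
      exact congrArg xs (Fin.ext (by simp only [Fin.val_mk]; rw [Nat.mod_eq_of_lt hj]))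
    · rw [if_neg hj, if_neg hj, ih (by omega) d]
      apply tower_congr
      intro i _
      exact congrArg xs (Fin.ext (by simp only [Fin.val_mk]; rw [Nat.add_mod_right]))

lemma tower_cols (hn : 2 ≤ n) (F : (Fin n → X) → X) :
    ∀ (k : ℕ) (w : ℕ → X) (c : X), (∀ j, j < k → assocB F (w j) c = c) →
      tower F k (fun i => w (i / (n-1))) c = c := by
  intro k
  induction k with
  | zero => intro w c _; rfl
  | succ k ih =>
    intro w c hw
    rw [tower_succ]
    have inner : tower F k (fun t => w ((t + (n-1)) / (n-1))) c = c := by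
      have : tower F k (fun t => w ((t + (n-1)) / (n-1))) c
          = tower F k (fun t => (fun j => w (j+1)) (t / (n-1))) c := by
        apply tower_congr
        intro i _
        rw [Nat.add_div_right _ (show 0 < n-1 by omega)]
      rw [this]
      exact ih (fun j => w (j+1)) c (fun j hj => hw (j+1) (by omega))
    have outer : (fun j : Fin n => if (j:ℕ) < n - 1 then w ((j:ℕ) / (n-1))
          else tower F k (fun t => w ((t + (n-1)) / (n-1))) c)
        = (fun j : Fin n => if (j:ℕ) < n - 1 then w 0 else c) := by
      funext j
      by_cases hj : (j:ℕ) < n-1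
      · rw [if_pos hj, if_pos hj, Nat.div_eq_of_lt hj]
      · rw [if_neg hj, if_neg hj, inner]
    rw [outer]
    exact hw 0 (by omega)

lemma half (hn : 2 ≤ n) (F : (Fin n → X) → X) (hA : NAssoc hn F) (hS : NSym F)
    (xs ys : Fin n → X) (h : ∀ i, assocB F (xs i) (ys i) = ys i) :
    assocB F (F xs) (F ys) = F ys := by
  set q := n - 1 with hq
  have hq1 : 1 ≤ q := by omega
  set rowg : ℕ → X := fun i =>
    xs ⟨i % (n-1), by have := Nat.mod_lt i (show 0 < n-1 by omega); omega⟩ with hrowg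
  -- Step 1: B(F xs, F ys) = tower (n-1) rowg (B(xₙ, F ys))
  have e1 : assocB F (F xs) (F ys)
      = tower F (n-1) rowg (assocB F (xs ⟨n-1, by omega⟩) (F ys)) := by
    rw [← Aexp hn F hA hS xs (n-1) (le_refl _) (F ys)]
    unfold assocB
    congr 1
    funext j
    by_cases hj : (j:ℕ) < n-1
    · rw [if_pos hj, if_pos hj]
    · rw [if_neg hj, if_neg hj, if_neg hj]
  -- Step 2: the innermost block collapses
  have e2 : assocB F (xs ⟨n-1, by omega⟩) (F ys) = F ys :=
    ell_fix hn F hA hS _ ys ⟨n-1, by omega⟩ (h _)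
  -- Step 3: transpose the (n-1) × (n-1) array of entries
  have hdvd : ∀ i : Fin ((n-1) * (n-1)), (i:ℕ) / (n-1) + ((i:ℕ) % (n-1)) * (n-1)
      < (n-1) * (n-1) := by
    intro i
    have h1 : (i:ℕ) / (n-1) < n-1 := by
      rw [Nat.div_lt_iff_lt_mul (show 0 < n-1 by omega)]
      exact i.isLt
    have h2 : (i:ℕ) % (n-1) < n-1 := Nat.mod_lt _ (by omega)
    calc (i:ℕ) / (n-1) + ((i:ℕ) % (n-1)) * (n-1)
        < (n-1) + ((i:ℕ) % (n-1)) * (n-1) := by omega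
      _ = (((i:ℕ) % (n-1)) + 1) * (n-1) := by ring
      _ ≤ (n-1) * (n-1) := Nat.mul_le_mul_right _ (by omega)
  set f : Fin ((n-1) * (n-1)) → Fin ((n-1) * (n-1)) :=
    fun i => ⟨(i:ℕ) / (n-1) + ((i:ℕ) % (n-1)) * (n-1), hdvd i⟩ with hf
  have hinv : Function.Involutive f := by
    intro x
    rw [hf]
    apply Fin.ext
    simp only [Fin.val_mk]
    have h1 : (x:ℕ) / (n-1) < n-1 := by
      rw [Nat.div_lt_iff_lt_mul (show 0 < n-1 by omega)]
      exact x.isLt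
    rw [Nat.add_mul_mod_self_right, Nat.add_mul_div_right _ _ (show 0 < n-1 by omega),
      Nat.mod_eq_of_lt h1, Nat.div_eq_of_lt h1]
    have := Nat.mod_add_div' (x:ℕ) (n-1)
    omega
  have e3 : tower F (n-1) rowg (F ys)
      = tower F (n-1) (fun i => xs ⟨(i / (n-1)) % n, by
          have := Nat.mod_lt (i / (n-1)) (show 0 < n by omega); omega⟩) (F ys) := by
    rw [tower_perm hn F hA hS (n-1) (F ys) hinv.toPerm rowg]
    apply tower_congr
    intro i hi
    rw [dif_pos hi]
    rw [hrowg]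
    apply congrArg xs
    apply Fin.ext
    simp only [Fin.val_mk, Function.Involutive.coe_toPerm, hf]
    have h1 : i / (n-1) < n-1 := by
      rw [Nat.div_lt_iff_lt_mul (show 0 < n-1 by omega)]
      exact hi
    rw [Nat.add_mul_mod_self_right, Nat.mod_eq_of_lt h1, Nat.mod_eq_of_lt (by omega)]
  -- Step 4: collapse the columns
  have e4 : tower F (n-1)
      (fun i => xs ⟨(i / (n-1)) % n, by
        have := Nat.mod_lt (i / (n-1)) (show 0 < n by omega); omega⟩) (F ys) = F ys := by
    exact tower_cols hn F (n-1)
      (fun j => xs ⟨j % n, by have := Nat.mod_lt j (show 0 < n by omega); omega⟩)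
      (F ys)
      (fun j _ => ell_fix hn F hA hS _ ys ⟨j % n, by
        have := Nat.mod_lt j (show 0 < n by omega); omega⟩ (h _))
  rw [e1, e2, e3, e4]

end Proof

/-- In a symmetric `n`-ary band, the relation `σ` is a congruence
for `F`. -/
theorem stmt_10 {X : Type*} {n : ℕ} (hn : 2 ≤ n) (F : (Fin n → X) → X)
    (hA : NAssoc hn F) (hS : NSym F) (hI : NIdem F) :
    ∀ xs ys : Fin n → X, (∀ i, sigmaRel F (xs i) (ys i)) →
      sigmaRel F (F xs) (F ys) := by
  intro xs ys h
  exact ⟨half hn F hA hS xs ys (fun i => (h i).1), half hn F hA hS ys xs (fun i => (h i).2)⟩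
end

section
/- Let (X,F) be a symmetric n-ary band and let x, y ∈ X satisfy B(x,y) = y (i.e., [x] ≥ [y]). Then ℓ_y maps the σ-class [x] into the σ-class [y], and the restriction of ℓ_y to [x] is a homomorphism of n-ary semigroups from ([x], F restricted to [x]^n) to ([y], F restricted to [y]^n): for all x₁,…,xₙ ∈ [x], ℓ_y(F(x₁,…,xₙ)) = F(ℓ_y(x₁),…,ℓ_y(xₙ)). -/
open NaryBand

namespace Aux13
variable {X : Type*}

def toFunL {n : ℕ} (d : X) (l : List X) : Fin n → X := fun j => l.getD (j : ℕ) d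

def ev {n : ℕ} (hn : 2 ≤ n) (F : (Fin n → X) → X) (d : X) (l : List X) : X :=
  if h : l.length ≤ 1 then l.headD d
  else ev hn F d (F (toFunL d l) :: l.drop n)
termination_by l.length
decreasing_by simp; omega

variable {n : ℕ} (hn : 2 ≤ n) (F : (Fin n → X) → X) (d : X)

lemma ev_low (l : List X) (h : l.length ≤ 1) : ev hn F d l = l.headD d := by
  rw [ev]; simp [h]

lemma ev_stepp (l : List X) (h : 2 ≤ l.length) :
    ev hn F d l = ev hn F d (F (toFunL d l) :: l.drop n) := by
  rw [ev]; simp [show ¬ l.length ≤ 1 by omega]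

lemma toFunL_append (u r : List X) (hu : u.length = n) :
    toFunL (n := n) d (u ++ r) = toFunL d u := by
  funext j
  have hj : (j : ℕ) < u.length := by rw [hu]; exact j.isLt
  exact List.getD_append u r d j hj

lemma ev_step' (u r : List X) (hu : u.length = n) :
    ev hn F d (u ++ r) = ev hn F d (F (toFunL d u) :: r) := by
  rw [ev_stepp hn F d _ (by simp [hu]; omega), toFunL_append d u r hu]
  congr 1
  simp [← hu, List.drop_left]

lemma ev_n (u : List X) (hu : u.length = n) : ev hn F d u = F (toFunL d u) := by
  have := ev_step' hn F d u [] hu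
  simp at this
  rw [this, ev_low] <;> simp

lemma contract_chain (hA : NAssoc hn F) :
    ∀ (i : ℕ) (hi : i ≤ n - 1) (x : Fin (2 * n - 1) → X),
      F (contract F i hn hi x) = F (contract F 0 hn (by omega) x) := by
  intro i
  induction i with
  | zero => intro hi x; rfl
  | succ i ih =>
    intro hi x
    rw [← hA i (by omega) x]
    exact ih (by omega) x


lemma getD3_left (A B C : List X) (j : ℕ) (h : j < A.length) :
    (A ++ B ++ C).getD j d = A.getD j d := by
  rw [List.getD_append _ _ _ _ (by simp; omega), List.getD_append _ _ _ _ h]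

lemma getD3_mid (A B C : List X) (j : ℕ) (h1 : A.length ≤ j) (h2 : j < A.length + B.length) :
    (A ++ B ++ C).getD j d = B.getD (j - A.length) d := by
  rw [List.getD_append _ _ _ _ (by simp; omega), List.getD_append_right _ _ _ _ h1]

lemma getD3_right (A B C : List X) (j : ℕ) (h : A.length + B.length ≤ j) :
    (A ++ B ++ C).getD j d = C.getD (j - A.length - B.length) d := by
  rw [List.getD_append_right _ _ _ _ (by simp; omega)]
  simp only [List.length_append]
  congr 1
  omega

lemma glue (L w R : List X) (i : ℕ) (hi : i ≤ n - 1) (hL : L.length = i)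
    (hw : w.length = n) (hT : L.length + w.length + R.length = 2 * n - 1) :
    (toFunL d (L ++ [F (toFunL d w)] ++ R) : Fin n → X)
      = contract F i hn hi (fun j : Fin (2 * n - 1) => (L ++ w ++ R).getD (j : ℕ) d) := by
  funext j
  unfold contract toFunL
  by_cases h1 : (j : ℕ) < i
  · simp only [dif_pos h1]
    rw [getD3_left d _ _ _ _ (by omega), getD3_left d _ _ _ _ (by omega)]
  · by_cases h2 : (j : ℕ) = i
    · simp only [dif_neg h1, dif_pos h2]
      rw [getD3_mid d _ _ _ _ (by omega) (by simp; omega)]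
      simp only [hL, h2, Nat.sub_self, List.getD_cons_zero]
      congr 1
      funext k
      rw [getD3_mid d _ _ _ _ (by omega) (by omega)]
      congr 1
      omega
    · simp only [dif_neg h1, dif_neg h2]
      rw [getD3_right d _ _ _ _ (by simp; omega), getD3_right d _ _ _ _ (by omega)]
      congr 1
      simp [hL]
      omega


lemma evG_base (hA : NAssoc hn F) (L w R : List X) (hL : L.length ≤ n - 1)
    (hw : w.length = n) (hdvd : (n - 1) ∣ (L.length + R.length)) :
    ev hn F d (L ++ [F (toFunL d w)] ++ R) = ev hn F d (L ++ w ++ R) := by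
  by_cases h0 : L.length + R.length = 0
  · have hL0 : L = [] := List.length_eq_zero_iff.mp (by omega)
    have hR0 : R = [] := List.length_eq_zero_iff.mp (by omega)
    subst hL0 hR0
    simp only [List.nil_append, List.append_nil]
    rw [ev_low hn F d _ (by simp), ev_n hn F d w hw]
    simp
  · have hge : n - 1 ≤ L.length + R.length := by
      obtain ⟨k, hk⟩ := hdvd
      have hk1 : 1 ≤ k := by
        rcases Nat.eq_zero_or_pos k with h | h
        · rw [h, Nat.mul_zero] at hk; omega
        · omega
      have h3 : (n - 1) * 1 ≤ (n - 1) * k := Nat.mul_le_mul_left _ hk1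
      rw [Nat.mul_one] at h3
      omega
    set Ra := R.take (n - 1 - L.length) with hRadef
    set Rb := R.drop (n - 1 - L.length) with hRbdef
    have hsplit : R = Ra ++ Rb := (List.take_append_drop _ R).symm
    have hRa : Ra.length = n - 1 - L.length := by
      rw [hRadef, List.length_take]; omega
    set v := L ++ w ++ Ra with hvdef
    have hv : v.length = 2 * n - 1 := by simp [hvdef, hw, hRa]; omega
    have hlen1 : (L ++ [F (toFunL d w)] ++ Ra).length = n := by
      simp [hRa]; omega
    have lhs1 : L ++ [F (toFunL d w)] ++ R = (L ++ [F (toFunL d w)] ++ Ra) ++ Rb := by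
      rw [hsplit]; simp [List.append_assoc]
    have rhs1 : L ++ w ++ R = v ++ Rb := by
      rw [hsplit, hvdef]; simp [List.append_assoc]
    rw [lhs1, rhs1, ev_step' hn F d _ Rb hlen1]
    have e1 : (toFunL d (L ++ [F (toFunL d w)] ++ Ra) : Fin n → X)
        = contract F L.length hn hL (fun j : Fin (2*n-1) => v.getD (j : ℕ) d) :=
      glue hn F d L w Ra L.length hL rfl hw (by simp [hw, hRa]; omega)
    have e2 : (toFunL d ([] ++ [F (toFunL d (v.take n))] ++ v.drop n) : Fin n → X)
        = contract F 0 hn (by omega) (fun j : Fin (2*n-1) => v.getD (j : ℕ) d) := by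
      have := glue hn F d [] (v.take n) (v.drop n) 0 (by omega) rfl
        (by rw [List.length_take]; omega) (by simp; omega)
      simpa [List.take_append_drop] using this
    rw [e1, contract_chain hn F hA L.length hL, ← e2]
    simp only [List.nil_append, List.singleton_append]
    rw [← ev_step' hn F d (F (toFunL d (v.take n)) :: v.drop n) Rb (by simp; omega)]
    have : (F (toFunL d (v.take n)) :: v.drop n) ++ Rb
        = F (toFunL d (v.take n)) :: (v.drop n ++ Rb) := by simp
    rw [this, ← ev_step' hn F d (v.take n) (v.drop n ++ Rb) (by rw [List.length_take]; omega)]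
    rw [← List.append_assoc, List.take_append_drop]

lemma evG (hA : NAssoc hn F) :
    ∀ (N : ℕ) (L w R : List X), L.length ≤ N → w.length = n →
      (n - 1) ∣ (L.length + R.length) →
      ev hn F d (L ++ [F (toFunL d w)] ++ R) = ev hn F d (L ++ w ++ R) := by
  intro N
  induction N with
  | zero =>
    intro L w R hLN hw hdvd
    exact evG_base hn F d hA L w R (by omega) hw hdvd
  | succ N ih =>
    intro L w R hLN hw hdvd
    by_cases hL : n ≤ L.length
    · have hsplit : L = L.take n ++ L.drop n := (List.take_append_drop _ L).symm
      have htk : (L.take n).length = n := by rw [List.length_take]; omega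
      have lhs1 : L ++ [F (toFunL d w)] ++ R = L.take n ++ (L.drop n ++ [F (toFunL d w)] ++ R) := by
        conv_lhs => rw [hsplit]
        simp only [List.append_assoc]
      have rhs1 : L ++ w ++ R = L.take n ++ (L.drop n ++ w ++ R) := by
        conv_lhs => rw [hsplit]
        simp only [List.append_assoc]
      rw [lhs1, rhs1, ev_step' hn F d _ _ htk, ev_step' hn F d _ _ htk]
      have c1 : F (toFunL d (L.take n)) :: (L.drop n ++ [F (toFunL d w)] ++ R)
          = (F (toFunL d (L.take n)) :: L.drop n) ++ [F (toFunL d w)] ++ R := by simp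
      have c2 : F (toFunL d (L.take n)) :: (L.drop n ++ w ++ R)
          = (F (toFunL d (L.take n)) :: L.drop n) ++ w ++ R := by simp
      rw [c1, c2]
      apply ih _ w R _ hw
      · obtain ⟨k, hk⟩ := hdvd
        have hk1 : 1 ≤ k := by
          rcases Nat.eq_zero_or_pos k with h | h
          · rw [h, Nat.mul_zero] at hk
            have : (L.take n).length = n := htk
            omega
          · omega
        obtain ⟨k', rfl⟩ : ∃ k', k = k' + 1 := ⟨k - 1, by omega⟩
        refine ⟨k', ?_⟩
        rw [Nat.mul_succ] at hk
        simp only [List.length_cons, List.length_drop]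
        omega
      · simp only [List.length_cons, List.length_drop]; omega
    · exact evG_base hn F d hA L w R (by omega) hw hdvd


lemma ev_swap (hA : NAssoc hn F) (hS : NSym F) (L R : List X) (a b : X)
    (hws : (n - 1) ∣ (L.length + R.length + 1)) :
    ev hn F d (L ++ a :: b :: R) = ev hn F d (L ++ b :: a :: R) := by
  have hge : n - 2 ≤ L.length + R.length := by
    obtain ⟨k, hk⟩ := hws
    have hk1 : 1 ≤ k := by
      rcases Nat.eq_zero_or_pos k with h | h
      · rw [h, Nat.mul_zero] at hk; omega
      · omega
    have h3 : (n - 1) * 1 ≤ (n - 1) * k := Nat.mul_le_mul_left _ hk1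
    rw [Nat.mul_one] at h3
    omega
  set s := min (n - 2) L.length with hsdef
  have hs1 : s ≤ n - 2 := min_le_left _ _
  have hs2 : s ≤ L.length := min_le_right _ _
  have hs3 : n - 2 - s ≤ R.length := by omega
  set L' := L.take (L.length - s) with hL'def
  set w₁ := L.drop (L.length - s) with hw₁def
  set w₂ := R.take (n - 2 - s) with hw₂def
  set R' := R.drop (n - 2 - s) with hR'def
  have hw₁ : w₁.length = s := by rw [hw₁def, List.length_drop]; omega
  have hw₂ : w₂.length = n - 2 - s := by rw [hw₂def, List.length_take]; omega
  have hL' : L'.length = L.length - s := by rw [hL'def, List.length_take]; omega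
  have hLsplit : L = L' ++ w₁ := (List.take_append_drop _ L).symm
  have hRsplit : R = w₂ ++ R' := (List.take_append_drop _ R).symm
  set w := w₁ ++ [a, b] ++ w₂ with hwdef
  set w' := w₁ ++ [b, a] ++ w₂ with hw'def
  have hwlen : w.length = n := by simp [hwdef, hw₁, hw₂]; omega
  have hw'len : w'.length = n := by simp [hw'def, hw₁, hw₂]; omega
  have key : F (toFunL d w) = F (toFunL d w') := by
    have hslt : s + 1 < n := by omega
    set p : Fin n := ⟨s, by omega⟩ with hpdef
    set q : Fin n := ⟨s + 1, hslt⟩ with hqdef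
    have hpq : p ≠ q := by simp [hpdef, hqdef, Fin.ext_iff]
    have hcomp : (toFunL d w : Fin n → X) = (toFunL d w' : Fin n → X) ∘ (Equiv.swap p q) := by
      funext j
      simp only [Function.comp_apply]
      by_cases hj1 : j = p
      · subst hj1
        rw [Equiv.swap_apply_left]
        show (w₁ ++ [a, b] ++ w₂).getD s d = (w₁ ++ [b, a] ++ w₂).getD (s + 1) d
        rw [getD3_mid d _ _ _ _ (by omega) (by simp [hw₁]),
            getD3_mid d _ _ _ _ (by omega) (by simp [hw₁])]
        simp [hw₁]
      · by_cases hj2 : j = q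
        · subst hj2
          rw [Equiv.swap_apply_right]
          show (w₁ ++ [a, b] ++ w₂).getD (s + 1) d = (w₁ ++ [b, a] ++ w₂).getD s d
          rw [getD3_mid d _ _ _ _ (by omega) (by simp [hw₁]),
              getD3_mid d _ _ _ _ (by omega) (by simp [hw₁])]
          simp [hw₁]
        · rw [Equiv.swap_apply_of_ne_of_ne hj1 hj2]
          show (w₁ ++ [a, b] ++ w₂).getD (j : ℕ) d = (w₁ ++ [b, a] ++ w₂).getD (j : ℕ) d
          have hjp : (j : ℕ) ≠ s := fun h => hj1 (by simp [hpdef, Fin.ext_iff, h])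
          have hjq : (j : ℕ) ≠ s + 1 := fun h => hj2 (by simp [hqdef, Fin.ext_iff, h])
          by_cases hlt : (j : ℕ) < s
          · rw [getD3_left d _ _ _ _ (by omega), getD3_left d _ _ _ _ (by omega)]
          · rw [getD3_right d _ _ _ _ (by simp [hw₁]; omega),
                getD3_right d _ _ _ _ (by simp [hw₁]; omega)]
            simp [hw₁]
    rw [hcomp, hS (Equiv.swap p q) (toFunL d w')]
  have hdvd' : (n - 1) ∣ (L'.length + R'.length) := by
    obtain ⟨k, hk⟩ := hws
    have hk1 : 1 ≤ k := by
      rcases Nat.eq_zero_or_pos k with h | h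
      · rw [h, Nat.mul_zero] at hk; omega
      · omega
    obtain ⟨k', rfl⟩ : ∃ k', k = k' + 1 := ⟨k - 1, by omega⟩
    refine ⟨k', ?_⟩
    rw [Nat.mul_succ] at hk
    have hR'' : R'.length = R.length - (n - 2 - s) := by rw [hR'def, List.length_drop]
    omega
  have lhs1 : L ++ a :: b :: R = L' ++ w ++ R' := by
    conv_lhs => rw [hLsplit, hRsplit]
    simp [hwdef, List.append_assoc]
  have rhs1 : L ++ b :: a :: R = L' ++ w' ++ R' := by
    conv_lhs => rw [hLsplit, hRsplit]
    simp [hw'def, List.append_assoc]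
  rw [lhs1, rhs1, ← evG hn F d hA L'.length L' w R' le_rfl hwlen hdvd',
      ← evG hn F d hA L'.length L' w' R' le_rfl hw'len hdvd', key]

lemma ev_perm' (hA : NAssoc hn F) (hS : NSym F) {l l' : List X} (h : l.Perm l') :
    ∀ pre : List X, (n - 1) ∣ (pre.length + l.length + (n - 2)) →
      ev hn F d (pre ++ l) = ev hn F d (pre ++ l') := by
  induction h with
  | nil => intro pre hws; rfl
  | @cons a l₁ l₂ h ih =>
    intro pre hws
    have h1 : pre ++ a :: l₁ = (pre ++ [a]) ++ l₁ := by simp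
    have h2 : pre ++ a :: l₂ = (pre ++ [a]) ++ l₂ := by simp
    rw [h1, h2]
    refine ih (pre ++ [a]) ?_
    have e : (pre ++ [a]).length + l₁.length + (n - 2)
        = pre.length + (a :: l₁).length + (n - 2) := by simp; omega
    rw [e]
    exact hws
  | swap x y t =>
    intro pre hws
    apply ev_swap hn F d hA hS
    simp only [List.length_cons] at hws
    obtain ⟨k, hk⟩ := hws
    have hk1 : 1 ≤ k := by
      rcases Nat.eq_zero_or_pos k with hh | hh
      · rw [hh, Nat.mul_zero] at hk; omega
      · omega
    obtain ⟨k', rfl⟩ : ∃ k', k = k' + 1 := ⟨k - 1, by omega⟩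
    refine ⟨k', ?_⟩
    rw [Nat.mul_succ] at hk
    omega
  | trans h1 h2 ih1 ih2 =>
    intro pre hws
    rw [ih1 pre hws, ih2 pre (by rw [← h1.length_eq]; exact hws)]

lemma ev_perm (hA : NAssoc hn F) (hS : NSym F) {l l' : List X} (h : l.Perm l')
    (hws : (n - 1) ∣ (l.length + (n - 2))) :
    ev hn F d l = ev hn F d l' := by
  have := ev_perm' hn F d hA hS h [] (by simpa using hws)
  simpa using this


lemma toFunL_replicate_n (a : X) : (toFunL d (List.replicate n a) : Fin n → X) = fun _ => a := by
  funext j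
  simp [toFunL, List.getD_eq_getElem?_getD, List.getElem?_replicate, j.isLt]

lemma toFunL_repl_single (a b : X) :
    (toFunL d (List.replicate (n - 1) a ++ [b]) : Fin n → X)
      = fun j : Fin n => if (j : ℕ) < n - 1 then a else b := by
  funext j
  unfold toFunL
  by_cases h : (j : ℕ) < n - 1
  · rw [List.getD_append _ _ _ _ (by simp; omega), if_pos h]
    simp [List.getD_eq_getElem?_getD, List.getElem?_replicate, h]
  · rw [List.getD_append_right _ _ _ _ (by simp; omega), if_neg h]
    have hj : (j : ℕ) - (List.replicate (n - 1) a).length = 0 := by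
      simp; have := j.isLt; omega
    rw [hj]
    rfl

lemma assocB_toFunL (a b : X) :
    assocB F a b = F (toFunL d (List.replicate (n - 1) a ++ [b])) := by
  rw [toFunL_repl_single]
  rfl

lemma assocB_ev (a b : X) :
    assocB F a b = ev hn F d (List.replicate (n - 1) a ++ [b]) := by
  rw [assocB_toFunL F d a b, ev_n hn F d _ (by simp; omega)]

lemma collapse (hI : NIdem F) (a : X) (r : List X) :
    ev hn F d (List.replicate n a ++ r) = ev hn F d (a :: r) := by
  rw [ev_step' hn F d _ _ (by simp), toFunL_replicate_n, hI a]

lemma evC' (hI : NIdem F) (a : X) :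
    ∀ (j : ℕ), 1 ≤ j → ∀ r : List X,
      ev hn F d (List.replicate (j * (n - 1)) a ++ r) = ev hn F d (List.replicate (n - 1) a ++ r) := by
  intro j
  induction j with
  | zero => omega
  | succ j ih =>
    intro _ r
    by_cases hj : j = 0
    · subst hj; rw [Nat.one_mul]
    · have hpos : 0 < j * (n - 1) := Nat.mul_pos (by omega) (by omega)
      have h1 : (j + 1) * (n - 1) = n + (j * (n - 1) - 1) := by
        rw [Nat.succ_mul]; omega
      rw [h1, List.replicate_add, List.append_assoc, collapse hn F d hI]
      have h2 : a :: (List.replicate (j * (n - 1) - 1) a ++ r)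
          = List.replicate (j * (n - 1)) a ++ r := by
        rw [← List.cons_append]
        congr 1
        rw [← List.replicate_succ]
        congr 1
        omega
      rw [h2]
      exact ih (by omega) r

lemma evH (hA : NAssoc hn F) (hS : NSym F) (y : X) :
    ∀ (l r : List X) (k : ℕ), l.length + r.length = k * (n - 1) + 1 →
      ev hn F d (l.map (fun c => F (toFunL d (List.replicate (n - 1) y ++ [c]))) ++ r)
        = ev hn F d (List.replicate (l.length * (n - 1)) y ++ (l ++ r)) := by
  intro l
  induction l with
  | nil => intro r k hk; simp
  | cons c l ih =>
    intro r k hk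
    simp only [List.map_cons, List.length_cons, List.cons_append]
    set f : X → X := fun c => F (toFunL d (List.replicate (n - 1) y ++ [c])) with hfdef
    have hw : (List.replicate (n - 1) y ++ [c]).length = n := by simp; omega
    have hlr : l.length + r.length = k * (n - 1) := by
      simp only [List.length_cons] at hk; omega
    have hfc : F (toFunL d (List.replicate (n - 1) y ++ [c])) = f c := rfl
    rw [hfc]
    have stepA : ev hn F d (f c :: (l.map f ++ r))
        = ev hn F d ((List.replicate (n - 1) y ++ [c]) ++ (l.map f ++ r)) := by
      have := evG hn F d hA 0 [] (List.replicate (n - 1) y ++ [c]) (l.map f ++ r)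
        le_rfl hw (by simp only [List.length_nil, List.length_append, List.length_map,
          Nat.zero_add]; rw [hlr]; exact dvd_mul_left _ _)
      simpa using this
    rw [stepA]
    set A := List.replicate (n - 1) y ++ [c] with hAdef
    have e : (List.map f l ++ r) ++ A = List.map f l ++ (r ++ A) := List.append_assoc _ _ _
    have hperm1 : (A ++ (l.map f ++ r)).Perm (l.map f ++ (r ++ A)) := by
      rw [← e]
      exact List.perm_append_comm
    have hws1 : (n - 1) ∣ ((A ++ (l.map f ++ r)).length + (n - 2)) := by
      have e : (A ++ (l.map f ++ r)).length + (n - 2) = (k + 2) * (n - 1) := by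
        have e2 : (k + 2) * (n - 1) = k * (n - 1) + 2 * (n - 1) := by ring
        simp only [List.length_append, List.length_map, hw]
        omega
      rw [e]
      exact dvd_mul_left _ _
    rw [ev_perm hn F d hA hS hperm1 hws1]
    have hr' : l.length + (r ++ A).length = (k + 1) * (n - 1) + 1 := by
      have e2 : (k + 1) * (n - 1) = k * (n - 1) + (n - 1) := by ring
      simp only [List.length_append, hw]
      omega
    rw [ih (r ++ A) (k + 1) hr']
    have hperm2 : (List.replicate (l.length * (n - 1)) y ++ (l ++ (r ++ A))).Perm
        (List.replicate ((l.length + 1) * (n - 1)) y ++ (c :: l ++ r)) := by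
      classical
      refine List.perm_iff_count.mpr fun a => ?_
      have e2 : (l.length + 1) * (n - 1) = l.length * (n - 1) + (n - 1) := by ring
      rw [e2]
      simp only [hAdef, List.count_append, List.count_replicate, List.count_cons,
        List.count_singleton, List.replicate_add]
      split_ifs <;> simp_all <;> omega
    have hws2 : (n - 1) ∣ ((List.replicate (l.length * (n - 1)) y ++ (l ++ (r ++ A))).length
        + (n - 2)) := by
      have e : (List.replicate (l.length * (n - 1)) y ++ (l ++ (r ++ A))).length + (n - 2)
          = (l.length + k + 2) * (n - 1) := by
        have e2 : (l.length + k + 2) * (n - 1)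
            = l.length * (n - 1) + k * (n - 1) + 2 * (n - 1) := by ring
        simp only [List.length_append, List.length_replicate, hw]
        omega
      rw [e]
      exact dvd_mul_left _ _
    rw [ev_perm hn F d hA hS hperm2 hws2, List.cons_append]

lemma assocB_self (hI : NIdem F) (a : X) : assocB F a a = a := by
  unfold assocB
  simpa using hI a

lemma ellB_idem (hA : NAssoc hn F) (hI : NIdem F) (y c : X) :
    assocB F y (assocB F y c) = assocB F y c := by
  rw [assocB_ev hn F y y (assocB F y c), assocB_toFunL F y y c]
  have hg := evG hn F y hA (n - 1) (List.replicate (n - 1) y)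
    (List.replicate (n - 1) y ++ [c]) [] (by simp) (by simp; omega) (by simp)
  simp only [List.append_nil] at hg
  rw [hg]
  have e : List.replicate (n - 1) y ++ (List.replicate (n - 1) y ++ [c])
      = List.replicate (2 * (n - 1)) y ++ [c] := by
    rw [← List.append_assoc, ← List.replicate_add]
    congr 2
    omega
  rw [e, evC' hn F y hI y 2 (by omega), ← assocB_ev hn F y y c, ← assocB_toFunL F y y c]

lemma descend (hA : NAssoc hn F) (hI : NIdem F) (x y z : X)
    (h1 : assocB F z x = x) (h2 : assocB F x y = y) : assocB F z y = y := by
  conv_lhs => rw [← h2]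
  rw [assocB_ev hn F y z (assocB F x y), assocB_toFunL F y x y]
  have hg := evG hn F y hA (n - 1) (List.replicate (n - 1) z)
    (List.replicate (n - 1) x ++ [y]) [] (by simp) (by simp; omega) (by simp)
  simp only [List.append_nil] at hg
  rw [hg]
  have e : List.replicate (n - 1) z ++ (List.replicate (n - 1) x ++ [y])
      = (List.replicate (n - 1) z ++ [x]) ++ (List.replicate (n - 2) x ++ [y]) := by
    have e2 : List.replicate (n - 1) x = x :: List.replicate (n - 2) x := by
      rw [← List.replicate_succ]
      congr 1
      omega
    rw [e2]
    simp
  rw [e, ev_step' hn F y _ _ (by simp; omega), ← assocB_toFunL F y z x, h1]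
  have e3 : x :: (List.replicate (n - 2) x ++ [y]) = List.replicate (n - 1) x ++ [y] := by
    have e2 : List.replicate (n - 1) x = x :: List.replicate (n - 2) x := by
      rw [← List.replicate_succ]
      congr 1
      omega
    rw [e2]
    simp
  rw [e3, ← assocB_ev hn F y x y, h2]

lemma key2 (hA : NAssoc hn F) (hS : NSym F) (hI : NIdem F) (y z : X)
    (hzy : assocB F z y = y) : assocB F (assocB F y z) y = y := by
  rw [assocB_ev hn F y (assocB F y z) y]
  have e1 : List.replicate (n - 1) (assocB F y z)
      = (List.replicate (n - 1) z).map
          (fun c => F (toFunL y (List.replicate (n - 1) y ++ [c]))) := by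
    rw [List.map_replicate, ← assocB_toFunL F y y z]
  rw [e1, evH hn F y hA hS y (List.replicate (n - 1) z) [y] 1 (by simp only [List.length_replicate, List.length_cons, List.length_nil, Nat.one_mul])]
  simp only [List.length_replicate]
  have hg := evG hn F y hA ((n - 1) * (n - 1)) (List.replicate ((n - 1) * (n - 1)) y)
    (List.replicate (n - 1) z ++ [y]) [] (by simp) (by simp; omega)
    (by simp)
  simp only [List.append_nil] at hg
  rw [← hg, ← assocB_toFunL F y z y, hzy]
  rw [evC' hn F y hI y (n - 1) (by omega) [y], ← assocB_ev hn F y y y, assocB_self F hI y]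

lemma toFunL_ofFn (xs : Fin n → X) : (toFunL d (List.ofFn xs) : Fin n → X) = xs := by
  funext j
  simp [toFunL, List.getD_eq_getElem?_getD, List.getElem?_ofFn, j.isLt]

lemma hom (hA : NAssoc hn F) (hS : NSym F) (hI : NIdem F) (y : X) (xs : Fin n → X) :
    assocB F y (F xs) = F (fun i => assocB F y (xs i)) := by
  rw [assocB_ev hn F y y (F xs)]
  conv_lhs => rw [← toFunL_ofFn y xs]
  have hgL := evG hn F y hA (n - 1) (List.replicate (n - 1) y) (List.ofFn xs) []
    (by simp) (by simp) (by simp)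
  simp only [List.append_nil] at hgL
  rw [hgL]
  have eR : (fun i => assocB F y (xs i))
      = (fun c => F (toFunL y (List.replicate (n - 1) y ++ [c]))) ∘ xs := by
    funext i
    simp only [Function.comp_apply]
    exact assocB_toFunL F y y (xs i)
  rw [show F (fun i => assocB F y (xs i)) = ev hn F y (List.ofFn (fun i => assocB F y (xs i)))
      from by rw [ev_n hn F y _ (by simp), toFunL_ofFn]]
  rw [eR, ← List.map_ofFn]
  have := evH hn F y hA hS y (List.ofFn xs) [] 1 (by simp only [List.length_ofFn, List.length_nil, Nat.one_mul]; omega)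
  simp only [List.append_nil, List.length_ofFn] at this
  rw [this, evC' hn F y hI y n (by omega)]

end Aux13

/-- In a symmetric `n`-ary band, if `B(x,y) = y` (i.e. `[x] ≥ [y]`),
then `ℓ_y` maps `[x]` into `[y]` and restricts to a homomorphism of `n`-ary
semigroups from `([x], F)` to `([y], F)`. -/
theorem stmt_13 {X : Type*} {n : ℕ} (hn : 2 ≤ n) (F : (Fin n → X) → X)
    (hA : NAssoc hn F) (hS : NSym F) (hI : NIdem F) :
    ∀ x y : X, assocB F x y = y →
      (∀ z : X, sigmaRel F x z → sigmaRel F y (ell F y z)) ∧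
      (∀ xs : Fin n → X, (∀ i, sigmaRel F x (xs i)) →
        ell F y (F xs) = F (fun i => ell F y (xs i))) := by
  intro x y hxy
  constructor
  · rintro z ⟨hxz, hzx⟩
    constructor
    · exact Aux13.ellB_idem hn F hA hI y z
    · exact Aux13.key2 hn F hA hS hI y z (Aux13.descend hn F hA hI x y z hzx hxy)
  · intro xs _
    exact Aux13.hom hn F hA hS hI y xs
end

section
/- Let (Y,∧) be a semilattice, (X_α)_{α∈Y} a family of nonempty sets, and for each α ∈ Y let F_α : X_α^n → X_α be an associative n-ary operation. Suppose that for all α, β ∈ Y with α ≥ β (i.e., α ∧ β = β) there is a map φ_{α,β} : X_α → X_β such that: (a) φ_{α,α} is the identity on X_α; (b) φ_{β,γ} ∘ φ_{α,β} = φ_{α,γ} whenever α ≥ β ≥ γ; and each φ_{α,β} is a homomorphism, i.e., φ_{α,β}(F_α(x₁,…,xₙ)) = F_β(φ_{α,β}(x₁),…,φ_{α,β}(xₙ)). Define F on the disjoint union X = ⨆_{α∈Y} X_α by: for x_i ∈ X_{α_i} (i = 1,…,n) and α = α₁ ∧ ⋯ ∧ αₙ, F(x₁,…,xₙ) = F_α(φ_{α₁,α}(x₁),…,φ_{αₙ,α}(xₙ)).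 Then F is an associative n-ary operation on X, i.e., (X,F) is an n-ary semigroup. -/
open NaryBand

section Aux
variable {Y : Type*} (meet : Y → Y → Y)

private def red (b : Y) (l : List Y) : Y := l.foldr meet b

private lemma red_cons (b h : Y) (t : List Y) : red meet b (h :: t) = meet h (red meet b t) := rfl

private lemma red_append (b : Y) (l1 l2 : List Y) :
    red meet b (l1 ++ l2) = red meet (red meet b l2) l1 := List.foldr_append ..

variable (hassoc : ∀ a b c, meet (meet a b) c = meet a (meet b c))
    (hcomm : ∀ a b, meet a b = meet b a)

include hassoc hcomm in
private lemma meet_red (c : Y) : ∀ (l : List Y) (b : Y),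
    meet c (red meet b l) = red meet (meet c b) l
  | [], _ => rfl
  | h :: t, b => by
    rw [red_cons, red_cons, ← meet_red c t b, ← hassoc, hcomm c h, hassoc]

include hassoc hcomm in
private lemma mem_absorb (hidem : ∀ a, meet a a = a) (z : Y) :
    ∀ (l : List Y) (b : Y), z ∈ l → meet z (red meet b l) = red meet b l
  | h :: t, b, hz => by
    rcases List.mem_cons.mp hz with rfl | hz
    · rw [red_cons, ← hassoc, hidem]
    · rw [red_cons, ← hassoc, hcomm z h, hassoc, mem_absorb hidem z t b hz]

private lemma absorb_red : ∀ (l : List Y) (b : Y), (∀ z ∈ l, meet z b = b) →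
    red meet b l = b
  | [], _, _ => rfl
  | h :: t, b, hz => by
    rw [red_cons, absorb_red t b (fun z hzt => hz z (List.mem_cons_of_mem h hzt)),
      hz h List.mem_cons_self]

include hassoc hcomm in
private lemma slMeet_meet (hidem : ∀ a, meet a a = a) {m : ℕ} (hm : 1 ≤ m)
    (y : Fin m → Y) (z : Y) :
    meet (nExt hm meet y) z = red meet z (List.ofFn y) := by
  obtain ⟨k, rfl⟩ : ∃ k, m = k + 1 := ⟨m - 1, by omega⟩
  have h1 : List.ofFn y = (List.ofFn (fun i : Fin k => y ⟨(i : ℕ), by have := i.isLt; omega⟩))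
      ++ [y ⟨k, by omega⟩] := by
    rw [List.ofFn_succ']
    simp [List.concat_eq_append]
    exact ⟨rfl, rfl⟩
  show meet (red meet (y ⟨k, by omega⟩) _) z = _
  rw [hcomm, meet_red meet hassoc hcomm, h1, red_append, hcomm z]
  rfl

private lemma red_split (N i n j : ℕ) (hin : i + n + j = N) (f : Fin N → Y) (z : Y) :
    red meet z (List.ofFn f) =
      red meet (red meet (red meet z
          (List.ofFn (fun k : Fin j => f ⟨i + n + (k : ℕ), by have := k.isLt; omega⟩)))
        (List.ofFn (fun k : Fin n => f ⟨i + (k : ℕ), by have := k.isLt; omega⟩)))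
      (List.ofFn (fun k : Fin i => f ⟨(k : ℕ), by have := k.isLt; omega⟩)) := by
  rw [← red_append, ← red_append]
  congr 1
  apply List.ext_getElem
  · simp; omega
  · intro m h1 h2
    simp only [List.getElem_ofFn, List.getElem_append, List.length_ofFn, List.length_append]
    split_ifs with hm1 hm2
    · rfl
    · congr 1; exact Fin.ext (by simp; omega)
    · congr 1; exact Fin.ext (by simp; omega)


private lemma ofFn_contract_split (n i : ℕ) (hn : 2 ≤ n) (hi : i ≤ n - 1)
    (a : Fin (2*n-1) → Y) (w : Y) (g : Fin n → Y)
    (hg1 : ∀ (k : Fin n), (k:ℕ) < i → g k = a ⟨(k:ℕ), by have := k.isLt; omega⟩)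
    (hg2 : ∀ (k : Fin n), (k:ℕ) = i → g k = w)
    (hg3 : ∀ (k : Fin n), i < (k:ℕ) → g k = a ⟨(k:ℕ) + n - 1, by have := k.isLt; omega⟩) :
    List.ofFn g =
      (List.ofFn (fun k : Fin i => a ⟨(k:ℕ), by have := k.isLt; omega⟩)) ++
      w :: (List.ofFn (fun k : Fin (n-1-i) => a ⟨i + n + (k:ℕ), by have := k.isLt; omega⟩)) := by
  apply List.ext_getElem
  · simp; omega
  · intro m h1 h2
    have hmn : m < n := by rwa [List.length_ofFn] at h1
    simp only [List.getElem_ofFn, List.getElem_append, List.getElem_cons, List.length_ofFn]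
    by_cases hm1 : m < i
    · rw [dif_pos hm1]
      exact hg1 ⟨m, hmn⟩ hm1
    · rw [dif_neg hm1]
      by_cases hm2 : m = i
      · rw [dif_pos (by omega : m - i = 0)]
        exact hg2 ⟨m, hmn⟩ hm2
      · rw [dif_neg (by omega : ¬ m - i = 0)]
        refine (hg3 ⟨m, hmn⟩ (show i < m by omega)).trans ?_
        simp only [List.getElem_ofFn]
        congr 1
        exact Fin.ext (by simp; omega)


end Aux


/-- A strong `n`-ary semilattice of `n`-ary semigroups is an
`n`-ary semigroup: given a semilattice `(Y,∧)`, nonempty sets `X_α`, associative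
`n`-ary operations `F_α`, and structure maps `φ_{α,β}` (identity at `α = α`,
compatible along `α ≥ β ≥ γ`, homomorphisms for `α ≥ β`), the operation `F` on the
disjoint union defined by
`F(x₁,…,xₙ) = F_α(φ_{α₁,α}(x₁),…,φ_{αₙ,α}(xₙ))` with `α = α₁ ∧ ⋯ ∧ αₙ` is
associative. -/
theorem stmt_14 {Y : Type*} {Xf : Y → Type*} {n : ℕ} (hn : 2 ≤ n)
    (meet : Y → Y → Y)
    (hassoc : ∀ a b c, meet (meet a b) c = meet a (meet b c))
    (hcomm : ∀ a b, meet a b = meet b a)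
    (hidem : ∀ a, meet a a = a)
    (hne : ∀ α, Nonempty (Xf α))
    (Fa : ∀ α, (Fin n → Xf α) → Xf α)
    (hFa : ∀ α, NAssoc hn (Fa α))
    (φ : ∀ α β, Xf α → Xf β)
    (hid : ∀ α, φ α α = id)
    (hcomp : ∀ α β γ, meet α β = β → meet β γ = γ → φ β γ ∘ φ α β = φ α γ)
    (hhom : ∀ α β, meet α β = β → ∀ xs : Fin n → Xf α,
      φ α β (Fa α xs) = Fa β (fun i => φ α β (xs i)))
    (F : (Fin n → Σ α, Xf α) → Σ α, Xf α)
    (hFdef : ∀ xs : Fin n → Σ α, Xf α,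
      F xs = ⟨nExt (show 1 ≤ n by omega) meet (fun i => (xs i).1),
        Fa _ (fun i => φ (xs i).1 _ (xs i).2)⟩) :
    NAssoc hn F := by
  intro i hi x
  have h1n : (1:ℕ) ≤ n := by omega
  have hN : (1:ℕ) ≤ 2*n-1 := by omega
  set a : Fin (2*n-1) → Y := fun j => (x j).1 with ha
  set μ : Y := nExt hN meet a with hμ
  set ys : Fin (2*n-1) → Xf μ := fun j => φ (a j) μ ((x j).2) with hys
  have f1 : ∀ z, meet μ z = red meet z (List.ofFn a) :=
    slMeet_meet meet hassoc hcomm hidem hN a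
  have f2 : μ = red meet μ (List.ofFn a) := by rw [← f1, hidem]
  have f3 : ∀ j, meet (a j) μ = μ := by
    intro j
    calc meet (a j) μ = meet (a j) (red meet μ (List.ofFn a)) := by rw [← f2]
      _ = red meet μ (List.ofFn a) :=
          mem_absorb meet hassoc hcomm hidem (a j) _ μ (by simp [List.mem_ofFn])
      _ = μ := f2.symm
  have hcast : ∀ (ν : Y) (h : ν = μ) (v : Xf ν), (⟨ν, v⟩ : Σ α, Xf α) = ⟨μ, φ ν μ v⟩ := by
    rintro ν rfl v; rw [hid]; rfl
  have main : ∀ (i' : ℕ) (hi' : i' ≤ n - 1),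
      F (contract F i' hn hi' x) = ⟨μ, Fa μ (contract (Fa μ) i' hn hi' ys)⟩ := by
    intro i' hi'
    have hiw : ∀ m : Fin n, i' + (m:ℕ) < 2*n-1 := fun m => by have := m.isLt; omega
    set w : Y := nExt h1n meet (fun m : Fin n => a ⟨i' + (m:ℕ), hiw m⟩) with hw
    have fw1 : ∀ z, meet w z = red meet z (List.ofFn (fun m : Fin n => a ⟨i' + (m:ℕ), hiw m⟩)) :=
      slMeet_meet meet hassoc hcomm hidem h1n _
    have fw2 : w = red meet w (List.ofFn (fun m : Fin n => a ⟨i' + (m:ℕ), hiw m⟩)) := by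
      rw [← fw1, hidem]
    have f4 : meet w μ = μ := by
      rw [fw1 μ]
      apply absorb_red
      intro z hz
      rw [List.mem_ofFn] at hz
      obtain ⟨m, rfl⟩ := hz
      exact f3 _
    have f5 : ∀ m : Fin n, meet (a ⟨i' + (m:ℕ), hiw m⟩) w = w := by
      intro m
      calc meet (a ⟨i' + (m:ℕ), hiw m⟩) w
          = meet (a ⟨i' + (m:ℕ), hiw m⟩) (red meet w _) := by rw [← fw2]
        _ = red meet w _ := mem_absorb meet hassoc hcomm hidem _ _ w
            (by simp [List.mem_ofFn])
        _ = w := fw2.symm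
    set c : Fin n → (Σ α, Xf α) := contract F i' hn hi' x with hc
    set ν : Y := nExt h1n meet (fun k => (c k).1) with hν0
    have hCsplit := ofFn_contract_split n i' hn hi' a w (fun k => (c k).1)
      (fun k hk => by simp only [hc, contract]; rw [dif_pos hk])
      (fun k hk => by
        simp only [hc, contract]; rw [dif_neg (by omega), dif_pos hk, hFdef])
      (fun k hk => by simp only [hc, contract]; rw [dif_neg (by omega), dif_neg (by omega)])
    have hzz : ∀ z, meet ν z = meet μ z := by
      intro z
      rw [hν0, slMeet_meet meet hassoc hcomm hidem h1n _ z, hCsplit, f1,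
        red_split meet (2*n-1) i' n (n-1-i') (by omega) a z,
        red_append, red_cons, fw1]
    have hν : ν = μ := by
      have h1 : ν = meet μ ν := by rw [← hzz, hidem]
      rw [h1, hcomm, hzz, hidem]
    have hνμ : meet ν μ = μ := by rw [hν, hidem]
    rw [show F (contract F i' hn hi' x) = F c from rfl, hFdef, hcast ν hν,
      hhom ν μ hνμ]
    apply congrArg (Sigma.mk μ)
    apply congrArg (Fa μ)
    funext k
    show φ ν μ (φ (c k).1 ν ((c k).2)) = contract (Fa μ) i' hn hi' ys k
    rw [hc]
    simp only [contract]
    by_cases hk1 : (k:ℕ) < i'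
    · rw [dif_pos hk1, dif_pos hk1]
      exact congrFun (hcomp _ ν μ (by rw [hν]; exact f3 _) hνμ) _
    · rw [dif_neg hk1, dif_neg hk1]
      by_cases hk2 : (k:ℕ) = i'
      · rw [dif_pos hk2, dif_pos hk2, hFdef]
        show φ ν μ (φ w ν (Fa w (fun m => φ (a ⟨i' + (m:ℕ), hiw m⟩) w ((x ⟨i' + (m:ℕ), hiw m⟩).2)))) = _
        exact (congrFun (hcomp w ν μ (by rw [hν]; exact f4) hνμ) _).trans
          ((hhom w μ f4 _).trans (congrArg (Fa μ)
            (funext fun m => congrFun (hcomp _ w μ (f5 m) f4) _)))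
      · rw [dif_neg hk2, dif_neg hk2]
        exact congrFun (hcomp _ ν μ (by rw [hν]; exact f3 _) hνμ) _
  exact (main i (by omega)).trans
    ((congrArg (Sigma.mk μ) (hFa μ i hi ys)).trans (main (i+1) (by omega)).symm)
end
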